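/- arXiv:1505.05188 — 2 statements merged into one kernel-verified Lean document; each statement's English description precedes it below -/
import Mathlib

section
/- Let U, V, W be nonempty compact subsets of ℂ and let p, q ∈ [1,∞] with 1/p + 1/q = 1. Then M_p = M_q, and if (U,V,W) is compatible then N_p = N_q. -/
open scoped ENNReal

noncomputable section

/-- The sequence space `ℓᵖ(ℤ)` (complex valued). -/
abbrev SeqZ (p : ℝ≥0∞) : Type := lp (fun _ : ℤ => ℂ) p
/-- The sequence space `ℓᵖ(ℕ)` (complex valued). -/
abbrev SeqN (p : ℝ≥0∞) : Type := lp (fun _ : ℕ => ℂ) p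

/-- The three diagonals take values in `U`, `V`, `W` respectively. -/
def RangesIn (U V W : Set ℂ) {ι : Type*} (u v w : ι → ℂ) : Prop :=
  (∀ i, u i ∈ U) ∧ (∀ i, v i ∈ V) ∧ (∀ i, w i ∈ W)

/-- `A` acts on `ℓᵖ(ℤ)` as the bi-infinite tridiagonal matrix with subdiagonal `u`
(entries `a_{i,i-1} = u i`), main diagonal `v` and superdiagonal `w` (`a_{i,i+1} = w i`). -/
def BiActs {p : ℝ≥0∞} [Fact (1 ≤ p)] (A : SeqZ p →L[ℂ] SeqZ p) (u v w : ℤ → ℂ) : Prop :=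
  ∀ (x : SeqZ p) (i : ℤ),
    (A x : ∀ _ : ℤ, ℂ) i =
      u i * (x : ∀ _ : ℤ, ℂ) (i - 1) + v i * (x : ∀ _ : ℤ, ℂ) i +
        w i * (x : ∀ _ : ℤ, ℂ) (i + 1)

/-- `A` acts on `ℓᵖ(ℕ)` as the semi-infinite tridiagonal matrix with subdiagonal `u`
(entries `a_{i,i-1} = u i` for `i ≥ 1`), main diagonal `v` and superdiagonal `w`. -/
def SemiActs {p : ℝ≥0∞} [Fact (1 ≤ p)] (A : SeqN p →L[ℂ] SeqN p) (u v w : ℕ → ℂ) : Prop :=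
  ∀ (x : SeqN p) (i : ℕ),
    (A x : ∀ _ : ℕ, ℂ) i =
      (if i = 0 then 0 else u i * (x : ∀ _ : ℕ, ℂ) (i - 1)) + v i * (x : ∀ _ : ℕ, ℂ) i +
        w i * (x : ∀ _ : ℕ, ℂ) (i + 1)

/-- membership in `M(U,V,W)`: bi-infinite tridiagonal operators over `(U,V,W)`. -/
def MemM (U V W : Set ℂ) {p : ℝ≥0∞} [Fact (1 ≤ p)] (A : SeqZ p →L[ℂ] SeqZ p) : Prop :=
  ∃ u v w : ℤ → ℂ, RangesIn U V W u v w ∧ BiActs A u v w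

/-- membership in `M₊(U,V,W)`: semi-infinite tridiagonal operators over `(U,V,W)`. -/
def MemMPlus (U V W : Set ℂ) {p : ℝ≥0∞} [Fact (1 ≤ p)] (A : SeqN p →L[ℂ] SeqN p) : Prop :=
  ∃ u v w : ℕ → ℂ, RangesIn U V W u v w ∧ SemiActs A u v w

/-- pseudoergodicity of bi-infinite diagonal data: every finite pattern of diagonals over
`(U,V,W)` is reproduced to arbitrary accuracy somewhere along the diagonals. -/
def PseudoergodicZ (U V W : Set ℂ) (u v w : ℤ → ℂ) : Prop :=
  ∀ (n : ℕ) (bu bv bw : Fin n → ℂ), RangesIn U V W bu bv bw →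
    ∀ ε : ℝ, 0 < ε → ∃ k : ℤ, ∀ i : Fin n,
      ‖u (k + (i : ℕ)) - bu i‖ < ε ∧ ‖v (k + (i : ℕ)) - bv i‖ < ε ∧
        ‖w (k + (i : ℕ)) - bw i‖ < ε

/-- pseudoergodicity of semi-infinite diagonal data. -/
def PseudoergodicN (U V W : Set ℂ) (u v w : ℕ → ℂ) : Prop :=
  ∀ (n : ℕ) (bu bv bw : Fin n → ℂ), RangesIn U V W bu bv bw →
    ∀ ε : ℝ, 0 < ε → ∃ k : ℕ, ∀ i : Fin n,
      ‖u (k + (i : ℕ)) - bu i‖ < ε ∧ ‖v (k + (i : ℕ)) - bv i‖ < ε ∧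
        ‖w (k + (i : ℕ)) - bw i‖ < ε

/-- membership in `PE(U,V,W)`: pseudoergodic bi-infinite operators. -/
def MemPE (U V W : Set ℂ) {p : ℝ≥0∞} [Fact (1 ≤ p)] (A : SeqZ p →L[ℂ] SeqZ p) : Prop :=
  ∃ u v w : ℤ → ℂ, RangesIn U V W u v w ∧ PseudoergodicZ U V W u v w ∧ BiActs A u v w

/-- membership in `PE₊(U,V,W)`: pseudoergodic semi-infinite operators. -/
def MemPEPlus (U V W : Set ℂ) {p : ℝ≥0∞} [Fact (1 ≤ p)] (A : SeqN p →L[ℂ] SeqN p) : Prop :=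
  ∃ u v w : ℕ → ℂ, RangesIn U V W u v w ∧ PseudoergodicN U V W u v w ∧ SemiActs A u v w

/-- `(U,V,W)` is compatible: every operator in `M(U,V,W)` is invertible on `ℓᵖ(ℤ)`
for every `p ∈ [1,∞]`. -/
def Compatible (U V W : Set ℂ) : Prop :=
  ∀ (p : ℝ≥0∞) [Fact (1 ≤ p)], ∀ A : SeqZ p →L[ℂ] SeqZ p, MemM U V W A → IsUnit A

/-- `α(A)`: the dimension of the kernel. -/
def alphaDim {E : Type*} [NormedAddCommGroup E] [NormedSpace ℂ E] (A : E →L[ℂ] E) : ℕ :=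
  Module.finrank ℂ (LinearMap.ker (A : E →ₗ[ℂ] E))

/-- `β(A)`: the codimension of the range. -/
def betaDim {E : Type*} [NormedAddCommGroup E] [NormedSpace ℂ E] (A : E →L[ℂ] E) : ℕ :=
  Module.finrank ℂ (E ⧸ LinearMap.range (A : E →ₗ[ℂ] E))

/-- `A` is a Fredholm operator: finite-dimensional kernel and finite-codimensional range. -/
def IsFredholmOp {E : Type*} [NormedAddCommGroup E] [NormedSpace ℂ E] (A : E →L[ℂ] E) : Prop :=
  FiniteDimensional ℂ (LinearMap.ker (A : E →ₗ[ℂ] E)) ∧ FiniteDimensional ℂ (E ⧸ LinearMap.range (A : E →ₗ[ℂ] E))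

/-- the Fredholm index `ind A = α(A) - β(A)`. -/
def fredIndex {E : Type*} [NormedAddCommGroup E] [NormedSpace ℂ E] (A : E →L[ℂ] E) : ℤ :=
  (alphaDim A : ℤ) - (betaDim A : ℤ)

/-- `(U,V,W)` is compatible and the common Fredholm index `κ(U,V,W)` of the semi-infinite
operators in `M₊(U,V,W)` equals `k`. -/
def KappaIs (U V W : Set ℂ) (k : ℤ) : Prop :=
  Compatible U V W ∧
    ∀ (p : ℝ≥0∞) [Fact (1 ≤ p)], ∀ B : SeqN p →L[ℂ] SeqN p, MemMPlus U V W B →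
      IsFredholmOp B ∧ fredIndex B = k

/-- union of the `ℓᵖ`-spectra of all operators in `M(U,V,W)`, at exponent `p`. -/
def specSetZAt (U V W : Set ℂ) (p : ℝ≥0∞) [Fact (1 ≤ p)] : Set ℂ :=
  {lam | ∃ C : SeqZ p →L[ℂ] SeqZ p, MemM U V W C ∧ lam ∈ spectrum ℂ C}

/-- union of the `ℓᵖ`-spectra of all operators in `M₊(U,V,W)`, at exponent `p`. -/
def specSetNAt (U V W : Set ℂ) (p : ℝ≥0∞) [Fact (1 ≤ p)] : Set ℂ :=
  {lam | ∃ C : SeqN p →L[ℂ] SeqN p, MemMPlus U V W C ∧ lam ∈ spectrum ℂ C}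

/-- `Σ(U,V,W)`: the union of the spectra of all operators in `M(U,V,W)`. -/
def SigmaSet (U V W : Set ℂ) : Set ℂ :=
  ⋃ (p : ℝ≥0∞), ⋃ (h : Fact (1 ≤ p)), @specSetZAt U V W p h

/-- `Σ₊(U,V,W)`: the union of the spectra of all operators in `M₊(U,V,W)`. -/
def SigmaPlusSet (U V W : Set ℂ) : Set ℂ :=
  ⋃ (p : ℝ≥0∞), ⋃ (h : Fact (1 ≤ p)), @specSetNAt U V W p h

/-- `V - λ`. -/
def shiftSet (V : Set ℂ) (lam : ℂ) : Set ℂ := (fun v => v - lam) '' V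

/-- `Σ_k(U,V,W) = {λ : (U, V-λ, W) compatible with κ(U, V-λ, W) = k}`. -/
def SigmaK (U V W : Set ℂ) (k : ℤ) : Set ℂ := {lam | KappaIs U (shiftSet V lam) W k}

/-- `Σ_{±1} = Σ_{-1} ∪ Σ_1`. -/
def SigmaPM (U V W : Set ℂ) : Set ℂ := SigmaK U V W (-1) ∪ SigmaK U V W 1

/-- the ellipse `E(u,v,w) = {u t + v + w/t : |t| = 1}`. -/
def ellipse (u v w : ℂ) : Set ℂ := (fun t : ℂ => u * t + v + w / t) '' {t : ℂ | ‖t‖ = 1}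

open Polynomial in
open Classical in
/-- winding number of the loop `t ↦ u t + v + w/t` (`t` on the unit circle, traversed
counter-clockwise) around `lam`, computed, via the argument principle, as the number of
roots (with multiplicity) of `u t² + (v - λ) t + w` in the open unit disk minus the order
of the pole at `0`.  (Valid whenever `lam` does not lie on the ellipse itself.) -/
def windingAt (u v w lam : ℂ) : ℤ :=
  (((C u * X ^ 2 + C (v - lam) * X + C w).roots.filter (fun z => ‖z‖ < 1)).card : ℤ) - 1

/-- `lam` lies inside the oriented ellipse `E(u,v,w)`: not on it, nonzero winding number. -/
def insideEllipse (u v w lam : ℂ) : Prop :=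
  lam ∉ ellipse u v w ∧ windingAt u v w lam ≠ 0

/-- `E_∩`: points inside all the ellipses `E(u,v,w)`, `(u,v,w) ∈ U × V × W`. -/
def Ecap (U V W : Set ℂ) : Set ℂ :=
  {lam | ∀ u ∈ U, ∀ v ∈ V, ∀ w ∈ W, insideEllipse u v w lam}

/-- `E₁`: points of `E_∩` circumnavigated clockwise (winding number `-1`) by all ellipses. -/
def Eone (U V W : Set ℂ) : Set ℂ :=
  {lam ∈ Ecap U V W | ∀ u ∈ U, ∀ v ∈ V, ∀ w ∈ W, windingAt u v w lam = -1}

/-- `E_{-1}`: points of `E_∩` circumnavigated counter-clockwise (winding number `1`). -/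
def EmOne (U V W : Set ℂ) : Set ℂ :=
  {lam ∈ Ecap U V W | ∀ u ∈ U, ∀ v ∈ V, ∀ w ∈ W, windingAt u v w lam = 1}

/-- `E_{±1} = E_{-1} ∪ E₁`. -/
def Epm (U V W : Set ℂ) : Set ℂ := EmOne U V W ∪ Eone U V W

/-- `E_∪`: the union of the filled ellipses. -/
def Ecup (U V W : Set ℂ) : Set ℂ :=
  ⋃ (u ∈ U) (v ∈ V) (w ∈ W), convexHull ℝ (ellipse u v w)

/-- `sup` of moduli over a set, e.g. `u^* = max_{u ∈ U} |u|`. -/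
def supAbs (S : Set ℂ) : ℝ := sSup ((fun z : ℂ => ‖z‖) '' S)

/-- `inf` of moduli over a set, e.g. `u_* = min_{u ∈ U} |u|`. -/
def infAbs (S : Set ℂ) : ℝ := sInf ((fun z : ℂ => ‖z‖) '' S)

/-- `M_p = sup_{B ∈ M(U,V,W)} ‖B‖_p`. -/
def Mnorm (U V W : Set ℂ) (p : ℝ≥0∞) [Fact (1 ≤ p)] : ℝ :=
  sSup {x : ℝ | ∃ B : SeqZ p →L[ℂ] SeqZ p, MemM U V W B ∧ x = ‖B‖}

/-- `N_p = sup_{B ∈ M(U,V,W)} ‖B⁻¹‖_p`. -/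
def Nnorm (U V W : Set ℂ) (p : ℝ≥0∞) [Fact (1 ≤ p)] : ℝ :=
  sSup {x : ℝ | ∃ B : SeqZ p →L[ℂ] SeqZ p, MemM U V W B ∧ x = ‖Ring.inverse B‖}

/-- `M_{+,p} = sup_{B₊ ∈ M₊(U,V,W)} ‖B₊‖_p`. -/
def MnormPlus (U V W : Set ℂ) (p : ℝ≥0∞) [Fact (1 ≤ p)] : ℝ :=
  sSup {x : ℝ | ∃ B : SeqN p →L[ℂ] SeqN p, MemMPlus U V W B ∧ x = ‖B‖}

/-- `N_{+,p} = sup_{B₊ ∈ M₊(U,V,W)} ‖B₊⁻¹‖_p`. -/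
def NnormPlus (U V W : Set ℂ) (p : ℝ≥0∞) [Fact (1 ≤ p)] : ℝ :=
  sSup {x : ℝ | ∃ B : SeqN p →L[ℂ] SeqN p, MemMPlus U V W B ∧ x = ‖Ring.inverse B‖}

/-- `p` is favourable for `(U,V,W)`: `‖A₊⁻¹‖_p = N_{+,p} = N_p` for all `A₊ ∈ PE₊(U,V,W)`. -/
def Favourable (U V W : Set ℂ) (p : ℝ≥0∞) [Fact (1 ≤ p)] : Prop :=
  ∀ A : SeqN p →L[ℂ] SeqN p, MemPEPlus U V W A →
    ‖Ring.inverse A‖ = NnormPlus U V W p ∧ NnormPlus U V W p = Nnorm U V W p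

/-- the `n × n` tridiagonal matrix with diagonals `u` (sub), `v` (main), `w` (super). -/
def JacobiMatrix {n : ℕ} (u v w : Fin n → ℂ) : Matrix (Fin n) (Fin n) ℂ :=
  fun i j =>
    if ((i : ℕ) : ℤ) = ((j : ℕ) : ℤ) + 1 then u i
    else if i = j then v i
    else if ((j : ℕ) : ℤ) = ((i : ℕ) : ℤ) + 1 then w i
    else 0

/-- the `ℓᵖ` norm of a finite complex vector. -/
def pVecNorm (p : ℝ≥0∞) [Fact (1 ≤ p)] {n : ℕ} (x : Fin n → ℂ) : ℝ :=
  ‖(WithLp.equiv p (Fin n → ℂ)).symm x‖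

/-- the operator norm of an `n × n` matrix acting on `(ℂⁿ, ‖·‖_p)`. -/
def matOpNorm (p : ℝ≥0∞) [Fact (1 ≤ p)] {n : ℕ} (F : Matrix (Fin n) (Fin n) ℂ) : ℝ :=
  sInf {c : ℝ | 0 ≤ c ∧ ∀ x : Fin n → ℂ, pVecNorm p (F.mulVec x) ≤ c * pVecNorm p x}

/-- the `p`-operator norm of the inverse matrix. -/
def matInvNorm (p : ℝ≥0∞) [Fact (1 ≤ p)] {n : ℕ} (F : Matrix (Fin n) (Fin n) ℂ) : ℝ :=
  matOpNorm p F⁻¹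

/-- `M_{n,p}`: sup of the `p`-norms of the `n × n` tridiagonal matrices over `(U,V,W)`. -/
def MnormFinN (U V W : Set ℂ) (p : ℝ≥0∞) [Fact (1 ≤ p)] (n : ℕ) : ℝ :=
  sSup {x : ℝ | ∃ u v w : Fin n → ℂ, RangesIn U V W u v w ∧
    x = matOpNorm p (JacobiMatrix u v w)}

/-- `M_{fin,p}`: sup of the `p`-norms of all finite tridiagonal matrices over `(U,V,W)`. -/
def MnormFin (U V W : Set ℂ) (p : ℝ≥0∞) [Fact (1 ≤ p)] : ℝ :=
  sSup {x : ℝ | ∃ (n : ℕ) (u v w : Fin n → ℂ), RangesIn U V W u v w ∧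
    x = matOpNorm p (JacobiMatrix u v w)}

/-- `N_{fin,p}`: sup of the `p`-norms of the inverses of all finite tridiagonal matrices. -/
def NnormFin (U V W : Set ℂ) (p : ℝ≥0∞) [Fact (1 ≤ p)] : ℝ :=
  sSup {x : ℝ | ∃ (n : ℕ) (u v w : Fin n → ℂ), RangesIn U V W u v w ∧
    x = matInvNorm p (JacobiMatrix u v w)}

/-- entry `(i,j)` of the bi-infinite tridiagonal matrix with diagonals `u`, `v`, `w`. -/
def secEntryZ (u v w : ℤ → ℂ) (i j : ℤ) : ℂ :=
  if i = j + 1 then u i else if i = j then v i else if j = i + 1 then w i else 0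

/-- the finite section `(a_{ij})_{i,j=l}^{r}` of the bi-infinite tridiagonal matrix. -/
def finSecZ (u v w : ℤ → ℂ) (l r : ℤ) :
    Matrix (Fin (r + 1 - l).toNat) (Fin (r + 1 - l).toNat) ℂ :=
  fun i j => secEntryZ u v w (l + (i : ℕ)) (l + (j : ℕ))

/-- entry `(i,j)` of the semi-infinite tridiagonal matrix with diagonals `u`, `v`, `w`. -/
def secEntryN (u v w : ℕ → ℂ) (i j : ℕ) : ℂ :=
  if i = j + 1 then u i else if i = j then v i else if j = i + 1 then w i else 0

/-- the `n`-th finite section (first `n` rows and columns) of the semi-infinite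
tridiagonal matrix with diagonals `u`, `v`, `w`. -/
def finSecN (u v w : ℕ → ℂ) (n : ℕ) : Matrix (Fin n) (Fin n) ℂ :=
  fun i j => secEntryN u v w i j

/-- stability of the sequence of finite sections of a bi-infinite tridiagonal matrix with
cut-off sequences `l`, `r`: eventually invertible with uniformly bounded inverses. -/
def StableSecsZ (p : ℝ≥0∞) [Fact (1 ≤ p)] (u v w : ℤ → ℂ) (l r : ℕ → ℤ) : Prop :=
  ∃ (n₀ : ℕ) (c : ℝ), ∀ n, n₀ ≤ n →
    IsUnit (finSecZ u v w (l n) (r n)) ∧ matInvNorm p (finSecZ u v w (l n) (r n)) ≤ c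

/-- stability of the sequence of finite sections of a semi-infinite tridiagonal matrix. -/
def StableSecsN (p : ℝ≥0∞) [Fact (1 ≤ p)] (u v w : ℕ → ℂ) (r : ℕ → ℕ) : Prop :=
  ∃ (n₀ : ℕ) (c : ℝ), ∀ n, n₀ ≤ n →
    IsUnit (finSecN u v w (r n)) ∧ matInvNorm p (finSecN u v w (r n)) ≤ c

/-- the full finite section method applies to every operator in `M(U,V,W)`:
the operator is invertible and the finite sections `(a_{ij})_{i,j=-n}^{n}` are stable. -/
def FullFSMAppliesZ (U V W : Set ℂ) : Prop :=
  ∀ (p : ℝ≥0∞) [Fact (1 ≤ p)], ∀ u v w : ℤ → ℂ, RangesIn U V W u v w →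
    ∀ A : SeqZ p →L[ℂ] SeqZ p, BiActs A u v w →
      IsUnit A ∧ StableSecsZ p u v w (fun n => -(n : ℤ)) (fun n => (n : ℤ))

/-- the full finite section method applies to every operator in `M₊(U,V,W)`:
the operator is invertible and the finite sections `(a_{ij})_{i,j=1}^{n}` are stable. -/
def FullFSMAppliesN (U V W : Set ℂ) : Prop :=
  ∀ (p : ℝ≥0∞) [Fact (1 ≤ p)], ∀ u v w : ℕ → ℂ, RangesIn U V W u v w →
    ∀ A : SeqN p →L[ℂ] SeqN p, SemiActs A u v w →
      IsUnit A ∧ StableSecsN p u v w (fun n => n)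

/-- one operator in `PE₊(U,V,W)` is invertible (on some, equivalently each, `ℓᵖ(ℕ)`). -/
def PEPlusInvAt (U V W : Set ℂ) (p : ℝ≥0∞) [Fact (1 ≤ p)] : Prop :=
  ∃ B : SeqN p →L[ℂ] SeqN p, MemPEPlus U V W B ∧ IsUnit B

def ExistsInvPEPlus (U V W : Set ℂ) : Prop :=
  ∃ (p : ℝ≥0∞) (h : Fact (1 ≤ p)), @PEPlusInvAt U V W p h

/-- one operator in `PE₊(U,V,W)` is Fredholm of index `0`. -/
def PEPlusFred0At (U V W : Set ℂ) (p : ℝ≥0∞) [Fact (1 ≤ p)] : Prop :=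
  ∃ B : SeqN p →L[ℂ] SeqN p, MemPEPlus U V W B ∧ IsFredholmOp B ∧ fredIndex B = 0

def ExistsFred0PEPlus (U V W : Set ℂ) : Prop :=
  ∃ (p : ℝ≥0∞) (h : Fact (1 ≤ p)), @PEPlusFred0At U V W p h

/-- all operators in `M₊(U,V,W)` are invertible (on every `ℓᵖ(ℕ)`). -/
def AllMPlusInv (U V W : Set ℂ) : Prop :=
  ∀ (p : ℝ≥0∞) [Fact (1 ≤ p)], ∀ B : SeqN p →L[ℂ] SeqN p, MemMPlus U V W B → IsUnit B

/-- the `ε`-pseudospectrum of a bounded operator (the spectrum together with the points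
where the resolvent has norm `> 1/ε`). -/
def pspec {E : Type*} [NormedAddCommGroup E] [NormedSpace ℂ E] (ε : ℝ)
    (A : E →L[ℂ] E) : Set ℂ :=
  {lam | ¬IsUnit (A - lam • (1 : E →L[ℂ] E)) ∨
    1 / ε < ‖Ring.inverse (A - lam • (1 : E →L[ℂ] E))‖}

/-- the `ε`-pseudospectrum of an `n × n` matrix, in the `p`-operator norm. -/
def pspecMat (p : ℝ≥0∞) [Fact (1 ≤ p)] {n : ℕ} (ε : ℝ) (F : Matrix (Fin n) (Fin n) ℂ) :
    Set ℂ :=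
  {lam | ¬IsUnit (F - lam • (1 : Matrix (Fin n) (Fin n) ℂ)) ∨
    1 / ε < matInvNorm p (F - lam • (1 : Matrix (Fin n) (Fin n) ℂ))}

/-- `Σ_ε^p`: union of the `ε`-pseudospectra of all operators in `M(U,V,W)`. -/
def SigmaEps (U V W : Set ℂ) (p : ℝ≥0∞) [Fact (1 ≤ p)] (ε : ℝ) : Set ℂ :=
  {lam | ∃ B : SeqZ p →L[ℂ] SeqZ p, MemM U V W B ∧ lam ∈ pspec ε B}

/-- `Σ_{+,ε}^p`: union of the `ε`-pseudospectra of all operators in `M₊(U,V,W)`. -/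
def SigmaPlusEps (U V W : Set ℂ) (p : ℝ≥0∞) [Fact (1 ≤ p)] (ε : ℝ) : Set ℂ :=
  {lam | ∃ B : SeqN p →L[ℂ] SeqN p, MemMPlus U V W B ∧ lam ∈ pspec ε B}

/-- `p` is favourable for all the (compatible, index zero) shifted triples `(U, V-λ, W)`. -/
def FavAll (U V W : Set ℂ) (p : ℝ≥0∞) [Fact (1 ≤ p)] : Prop :=
  ∀ lam : ℂ, KappaIs U (shiftSet V lam) W 0 → Favourable U (shiftSet V lam) W p

end

noncomputable section S9aux

namespace S9

open scoped ENNReal ComplexConjugate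

/-! ### Exponent arithmetic -/

lemma fact_ne_zero {r : ℝ≥0∞} [h : Fact (1 ≤ r)] : r ≠ 0 :=
  (zero_lt_one.trans_le h.out).ne'

lemma toReal_pos {r : ℝ≥0∞} [Fact (1 ≤ r)] (hr : r ≠ ∞) : 0 < r.toReal :=
  ENNReal.toReal_pos fact_ne_zero hr

lemma conj_trichotomy {r s : ℝ≥0∞} (h : r.HolderConjugate s) :
    (r = 1 ∧ s = ∞) ∨ (r = ∞ ∧ s = 1) ∨
      (r ≠ ∞ ∧ s ≠ ∞ ∧ r.toReal.HolderConjugate s.toReal) := by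
  have hinv := ENNReal.HolderConjugate.inv_add_inv_eq_one r s
  rcases eq_or_ne r 1 with rfl | hr1
  · left
    refine ⟨rfl, ?_⟩
    rw [inv_one] at hinv
    have h0 : s⁻¹ = 0 := by
      have := ENNReal.add_right_inj (a := (1:ℝ≥0∞)) (b := s⁻¹) (c := 0) ENNReal.one_ne_top
      rw [add_zero] at this
      exact this.1 hinv
    simpa [ENNReal.inv_eq_zero] using h0
  rcases eq_or_ne r ∞ with rfl | hrt
  · right; left
    refine ⟨rfl, ?_⟩
    rw [ENNReal.inv_top, zero_add] at hinv
    simpa [ENNReal.inv_eq_one] using hinv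
  · right; right
    have hst : s ≠ ∞ := by
      intro hs
      rw [hs, ENNReal.inv_top, add_zero] at hinv
      exact hr1 (by simpa [ENNReal.inv_eq_one] using hinv)
    refine ⟨hrt, hst, Real.holderConjugate_iff.2 ⟨?_, ?_⟩⟩
    · have h1r : 1 < r := lt_of_le_of_ne (ENNReal.HolderConjugate.one_le r s) (Ne.symm hr1)
      have := (ENNReal.toReal_lt_toReal (a := 1) (b := r) ENNReal.one_ne_top hrt).2 h1r
      simpa using this
    · have hr0 : r ≠ 0 := ENNReal.HolderConjugate.ne_zero r s
      have hs0 : s ≠ 0 := ENNReal.HolderConjugate.ne_zero s r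
      have hfin : r⁻¹ ≠ ∞ := by simpa [ENNReal.inv_eq_top] using hr0
      have hfin' : s⁻¹ ≠ ∞ := by simpa [ENNReal.inv_eq_top] using hs0
      have := congrArg ENNReal.toReal hinv
      rwa [ENNReal.toReal_add hfin hfin', ENNReal.toReal_inv, ENNReal.toReal_inv,
        ENNReal.toReal_one] at this

/-! ### Basic `lp` lemmas over `ℤ` -/

lemma memℓp_comp_equiv {r : ℝ≥0∞} {f : ℤ → ℂ} (hf : Memℓp f r) (e : ℤ ≃ ℤ) :
    Memℓp (fun i => f (e i)) r := by
  rcases eq_or_ne r 0 with rfl | h0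
  · rw [memℓp_zero_iff] at hf ⊢
    have : {i : ℤ | f (e i) ≠ 0} = e ⁻¹' {i : ℤ | f i ≠ 0} := rfl
    rw [this]
    exact Set.Finite.preimage (e.injective.injOn) hf
  rcases eq_or_ne r ∞ with rfl | htop
  · rw [memℓp_infty_iff] at hf ⊢
    have : (Set.range fun i => ‖f (e i)‖) = Set.range fun i => ‖f i‖ := by
      exact Function.Surjective.range_comp e.surjective (fun i => ‖f i‖)
    rwa [this]
  · have hr0 : 0 < r.toReal := ENNReal.toReal_pos h0 htop
    rw [memℓp_gen_iff hr0] at hf ⊢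
    exact (e.summable_iff (f := fun i => ‖f i‖ ^ r.toReal)).2 hf

/-- the reindexed element of `SeqZ r`. -/
def reindex {r : ℝ≥0∞} (e : ℤ ≃ ℤ) (f : SeqZ r) : SeqZ r :=
  ⟨fun i => (f : ℤ → ℂ) (e i), memℓp_comp_equiv (lp.memℓp f) e⟩

@[simp] lemma reindex_coe {r : ℝ≥0∞} (e : ℤ ≃ ℤ) (f : SeqZ r) (i : ℤ) :
    (reindex e f : ℤ → ℂ) i = (f : ℤ → ℂ) (e i) := rfl

lemma norm_reindex {r : ℝ≥0∞} [Fact (1 ≤ r)] (e : ℤ ≃ ℤ) (f : SeqZ r) :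
    ‖reindex e f‖ = ‖f‖ := by
  rcases eq_or_ne r ∞ with rfl | htop
  · rw [lp.norm_eq_ciSup, lp.norm_eq_ciSup]
    have : (Set.range fun i => ‖(reindex (r := ∞) e f : ℤ → ℂ) i‖) =
        Set.range fun i => ‖(f : ℤ → ℂ) i‖ :=
      Function.Surjective.range_comp e.surjective (fun i => ‖(f : ℤ → ℂ) i‖)
    rw [iSup, iSup, this]
  · have hr0 : 0 < r.toReal := toReal_pos htop
    rw [lp.norm_eq_tsum_rpow hr0, lp.norm_eq_tsum_rpow hr0]
    congr 1
    exact e.tsum_eq (fun i => ‖(f : ℤ → ℂ) i‖ ^ r.toReal)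

lemma lp_norm_le_mul {r : ℝ≥0∞} [Fact (1 ≤ r)] (f g : SeqZ r) {C : ℝ} (hC : 0 ≤ C)
    (h : ∀ i, ‖(f : ℤ → ℂ) i‖ ≤ C * ‖(g : ℤ → ℂ) i‖) : ‖f‖ ≤ C * ‖g‖ := by
  rcases eq_or_ne r ∞ with rfl | htop
  · refine lp.norm_le_of_forall_le (mul_nonneg hC (norm_nonneg _)) fun i => ?_
    exact (h i).trans (by
      have := lp.norm_apply_le_norm (by norm_num : (∞ : ℝ≥0∞) ≠ 0) g i
      exact mul_le_mul_of_nonneg_left this hC)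
  · have hr0 : 0 < r.toReal := toReal_pos htop
    refine lp.norm_le_of_forall_sum_le hr0 (mul_nonneg hC (norm_nonneg _)) fun s => ?_
    calc ∑ i ∈ s, ‖(f : ℤ → ℂ) i‖ ^ r.toReal
        ≤ ∑ i ∈ s, (C * ‖(g : ℤ → ℂ) i‖) ^ r.toReal := by
          refine Finset.sum_le_sum fun i _ => ?_
          exact Real.rpow_le_rpow (norm_nonneg _) (h i) hr0.le
      _ = C ^ r.toReal * ∑ i ∈ s, ‖(g : ℤ → ℂ) i‖ ^ r.toReal := by
          rw [Finset.mul_sum]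
          refine Finset.sum_congr rfl fun i _ => ?_
          rw [Real.mul_rpow hC (norm_nonneg _)]
      _ ≤ C ^ r.toReal * ‖g‖ ^ r.toReal := by
          refine mul_le_mul_of_nonneg_left ?_ (Real.rpow_nonneg hC _)
          exact lp.sum_rpow_le_norm_rpow hr0 g s
      _ = (C * ‖g‖) ^ r.toReal := (Real.mul_rpow hC (norm_nonneg _)).symm

lemma memℓp_finsupp {r : ℝ≥0∞} [Fact (1 ≤ r)] {g : ℤ → ℂ} (F : Finset ℤ)
    (hg : ∀ i ∉ F, g i = 0) : Memℓp g r := by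
  rcases eq_or_ne r ∞ with rfl | htop
  · refine memℓp_infty ?_
    have : (Set.range fun i => ‖g i‖) ⊆ insert 0 ((F.image fun i => ‖g i‖) : Set ℝ) := by
      rintro x ⟨i, rfl⟩
      by_cases hi : i ∈ F
      · exact Set.mem_insert_of_mem _ (by simpa using ⟨i, hi, rfl⟩)
      · simp [hg i hi]
    exact (((F.image fun i => ‖g i‖).finite_toSet.insert 0).subset this).bddAbove
  · refine memℓp_gen ?_
    refine summable_of_ne_finset_zero (s := F) fun i hi => ?_
    rw [hg i hi]
    simp [Real.zero_rpow (toReal_pos htop).ne']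

lemma norm_finsupp_rpow {r : ℝ≥0∞} [Fact (1 ≤ r)] (htop : r ≠ ∞) {g : ℤ → ℂ} {F : Finset ℤ}
    (hg : ∀ i ∉ F, g i = 0) (mem : Memℓp g r) :
    ‖(⟨g, mem⟩ : SeqZ r)‖ ^ r.toReal = ∑ i ∈ F, ‖g i‖ ^ r.toReal := by
  rw [lp.norm_rpow_eq_tsum (toReal_pos htop)]
  exact tsum_eq_sum fun i hi => by
    rw [show ((⟨g, mem⟩ : SeqZ r) : ℤ → ℂ) i = g i from rfl, hg i hi]
    simp [Real.zero_rpow (toReal_pos htop).ne']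

end S9

end S9aux

noncomputable section S9aux2

namespace S9

open scoped ENNReal ComplexConjugate

lemma holder_summable_le {r s : ℝ≥0∞} [Fact (1 ≤ r)] [Fact (1 ≤ s)] (h : r.HolderConjugate s)
    (f : SeqZ r) (g : SeqZ s) (e : ℤ ≃ ℤ) :
    Summable (fun i => ‖(f : ℤ → ℂ) i‖ * ‖(g : ℤ → ℂ) (e i)‖) ∧
      ∑' i, ‖(f : ℤ → ℂ) i‖ * ‖(g : ℤ → ℂ) (e i)‖ ≤ ‖f‖ * ‖g‖ := by
  rcases conj_trichotomy h with ⟨hr1, hst⟩ | ⟨hrt, hs1⟩ | ⟨hrt, hst, hcj⟩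
  · subst hr1; subst hst
    have hf1 : Summable fun i => ‖(f : ℤ → ℂ) i‖ := by
      simpa using (lp.memℓp f).summable (by norm_num)
    have hnf : ‖f‖ = ∑' i, ‖(f : ℤ → ℂ) i‖ := by
      simpa using lp.norm_eq_tsum_rpow (by norm_num) f
    have hb : ∀ i, ‖(f : ℤ → ℂ) i‖ * ‖(g : ℤ → ℂ) (e i)‖ ≤ ‖(f : ℤ → ℂ) i‖ * ‖g‖ := fun i =>
      mul_le_mul_of_nonneg_left (lp.norm_apply_le_norm (by norm_num) g (e i)) (norm_nonneg _)
    have hs : Summable fun i => ‖(f : ℤ → ℂ) i‖ * ‖g‖ := hf1.mul_right _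
    refine ⟨Summable.of_nonneg_of_le (fun i => by positivity) hb hs, ?_⟩
    calc ∑' i, ‖(f : ℤ → ℂ) i‖ * ‖(g : ℤ → ℂ) (e i)‖
        ≤ ∑' i, ‖(f : ℤ → ℂ) i‖ * ‖g‖ :=
          Summable.tsum_le_tsum hb (Summable.of_nonneg_of_le (fun i => by positivity) hb hs) hs
      _ = (∑' i, ‖(f : ℤ → ℂ) i‖) * ‖g‖ := tsum_mul_right
      _ = ‖f‖ * ‖g‖ := by rw [hnf]
  · subst hrt; subst hs1
    have hg1 : Summable fun i => ‖(g : ℤ → ℂ) i‖ := by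
      simpa using (lp.memℓp g).summable (by norm_num)
    have hng : ‖g‖ = ∑' i, ‖(g : ℤ → ℂ) i‖ := by
      simpa using lp.norm_eq_tsum_rpow (by norm_num) g
    have hge : Summable fun i => ‖(g : ℤ → ℂ) (e i)‖ := by
      have := (lp.memℓp (reindex e g)).summable (by norm_num : (0:ℝ) < (1:ℝ≥0∞).toReal)
      simpa only [reindex_coe, ENNReal.toReal_one, Real.rpow_one] using this
    have hb : ∀ i, ‖(f : ℤ → ℂ) i‖ * ‖(g : ℤ → ℂ) (e i)‖ ≤ ‖f‖ * ‖(g : ℤ → ℂ) (e i)‖ := fun i =>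
      mul_le_mul_of_nonneg_right (lp.norm_apply_le_norm (by norm_num) f i) (norm_nonneg _)
    have hs : Summable fun i => ‖f‖ * ‖(g : ℤ → ℂ) (e i)‖ := hge.mul_left _
    refine ⟨Summable.of_nonneg_of_le (fun i => by positivity) hb hs, ?_⟩
    calc ∑' i, ‖(f : ℤ → ℂ) i‖ * ‖(g : ℤ → ℂ) (e i)‖
        ≤ ∑' i, ‖f‖ * ‖(g : ℤ → ℂ) (e i)‖ :=
          Summable.tsum_le_tsum hb (Summable.of_nonneg_of_le (fun i => by positivity) hb hs) hs
      _ = ‖f‖ * ∑' i, ‖(g : ℤ → ℂ) (e i)‖ := tsum_mul_left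
      _ = ‖f‖ * ‖g‖ := by rw [hng, e.tsum_eq (fun i => ‖(g : ℤ → ℂ) i‖)]
  · have hfs : Summable fun i => ‖(f : ℤ → ℂ) i‖ ^ r.toReal := (lp.memℓp f).summable (toReal_pos hrt)
    have hgs : Summable fun i => ‖(g : ℤ → ℂ) i‖ ^ s.toReal := (lp.memℓp g).summable (toReal_pos hst)
    have hges : Summable fun i => ‖(g : ℤ → ℂ) (e i)‖ ^ s.toReal := by
      have := (lp.memℓp (reindex e g)).summable (toReal_pos hst)
      simpa only [reindex_coe] using this
    have H := Real.summable_and_inner_le_Lp_mul_Lq_tsum_of_nonneg hcj (fun i => norm_nonneg _)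
      (fun i => norm_nonneg _) hfs hges
    refine ⟨H.1, H.2.trans_eq ?_⟩
    rw [lp.norm_eq_tsum_rpow (toReal_pos hrt) f, lp.norm_eq_tsum_rpow (toReal_pos hst) g,
      ← e.tsum_eq (fun i => ‖(g : ℤ → ℂ) i‖ ^ s.toReal)]

/-- the bilinear pairing `∑ᵢ f i * g (-i)`. -/
def pairT (f g : ℤ → ℂ) : ℂ := ∑' i, f i * g (-i)

lemma norm_pairT_le {r s : ℝ≥0∞} [Fact (1 ≤ r)] [Fact (1 ≤ s)] (h : r.HolderConjugate s)
    (f : SeqZ r) (g : SeqZ s) :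
    ‖pairT (f : ℤ → ℂ) (g : ℤ → ℂ)‖ ≤ ‖f‖ * ‖g‖ := by
  have H := holder_summable_le h f g (Equiv.neg ℤ)
  have hsum : Summable fun i => ‖(f : ℤ → ℂ) i * (g : ℤ → ℂ) (-i)‖ := by
    simpa [norm_mul] using H.1
  refine (norm_tsum_le_tsum_norm hsum).trans ?_
  calc ∑' i, ‖(f : ℤ → ℂ) i * (g : ℤ → ℂ) (-i)‖
      = ∑' i, ‖(f : ℤ → ℂ) i‖ * ‖(g : ℤ → ℂ) ((Equiv.neg ℤ) i)‖ :=
        tsum_congr fun i => by simp [norm_mul]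
    _ ≤ ‖f‖ * ‖g‖ := H.2

/-- complex "sign": `conj z / ‖z‖`. -/
def csgn (z : ℂ) : ℂ := if z = 0 then 0 else (starRingEnd ℂ) z / (‖z‖ : ℝ)

lemma norm_csgn_le (z : ℂ) : ‖csgn z‖ ≤ 1 := by
  unfold csgn
  split_ifs with h
  · simp
  · have hz : ‖z‖ ≠ 0 := norm_ne_zero_iff.2 h
    rw [norm_div]
    simp only [RCLike.norm_conj]
    rw [Complex.norm_real, Real.norm_eq_abs, abs_of_nonneg (norm_nonneg _)]
    rw [div_self hz]

lemma mul_csgn (z : ℂ) : z * csgn z = ((‖z‖ : ℝ) : ℂ) := by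
  unfold csgn
  split_ifs with h
  · simp [h]
  · have hz : ((‖z‖ : ℝ) : ℂ) ≠ 0 := by
      simpa using norm_ne_zero_iff.2 h
    rw [← mul_div_assoc, Complex.mul_conj, div_eq_iff hz]
    norm_cast
    rw [Complex.normSq_eq_norm_sq, pow_two]

lemma exists_finset_sum_gt {f : ℤ → ℝ} (hf : Summable f) {c : ℝ} (hc : c < ∑' i, f i) :
    ∃ F : Finset ℤ, c < ∑ i ∈ F, f i :=
  (hf.hasSum.eventually (eventually_gt_nhds hc)).exists

lemma exists_dual_pair {r s : ℝ≥0∞} [Fact (1 ≤ r)] [Fact (1 ≤ s)] (h : r.HolderConjugate s)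
    (f : SeqZ r) {c : ℝ} (hc : c < ‖f‖) :
    ∃ g : SeqZ s, ‖g‖ ≤ 1 ∧ c < ‖pairT (f : ℤ → ℂ) (g : ℤ → ℂ)‖ := by
  rcases lt_or_ge c 0 with hc0 | hc0
  · exact ⟨0, by simp, lt_of_lt_of_le hc0 (norm_nonneg _)⟩
  rcases conj_trichotomy h with ⟨hr1, hst⟩ | ⟨hrt, hs1⟩ | ⟨hrt, hst, hcj⟩
  · -- r = 1, s = ∞
    subst hr1; subst hst
    have hf1 : Summable fun i => ‖(f : ℤ → ℂ) i‖ := by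
      simpa using (lp.memℓp f).summable (by norm_num)
    have hnf : ‖f‖ = ∑' i, ‖(f : ℤ → ℂ) i‖ := by
      simpa using lp.norm_eq_tsum_rpow (by norm_num) f
    obtain ⟨F, hF⟩ := exists_finset_sum_gt hf1 (hnf ▸ hc)
    set g : ℤ → ℂ := fun j => if -j ∈ F then csgn ((f : ℤ → ℂ) (-j)) else 0 with hgdef
    have hgsupp : ∀ j ∉ F.image (fun i => -i), g j = 0 := by
      intro j hj
      rw [hgdef]
      refine if_neg fun hmem => hj (Finset.mem_image.2 ⟨-j, hmem, by ring⟩)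
    have hmem : Memℓp g ∞ := memℓp_finsupp _ hgsupp
    refine ⟨⟨g, hmem⟩, ?_, ?_⟩
    · refine lp.norm_le_of_forall_le zero_le_one fun i => ?_
      show ‖g i‖ ≤ 1
      rw [hgdef]
      dsimp only
      split_ifs
      · exact norm_csgn_le _
      · simp
    · have hval : pairT (f : ℤ → ℂ) g = ((∑ i ∈ F, ‖(f : ℤ → ℂ) i‖ : ℝ) : ℂ) := by
        rw [pairT, tsum_eq_sum (s := F) (fun i hi => by
          rw [hgdef]; dsimp only; rw [neg_neg, if_neg hi, mul_zero])]
        push_cast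
        refine Finset.sum_congr rfl fun i hi => ?_
        rw [hgdef]; dsimp only
        rw [neg_neg, if_pos hi, mul_csgn]
      show c < ‖pairT (f : ℤ → ℂ) g‖
      rw [hval, Complex.norm_real, Real.norm_eq_abs,
        abs_of_nonneg (Finset.sum_nonneg fun i _ => norm_nonneg _)]
      exact hF
  · -- r = ∞, s = 1
    subst hrt; subst hs1
    have hb := (lp.memℓp f).bddAbove
    have hcs : c < ⨆ i, ‖(f : ℤ → ℂ) i‖ := by
      rw [← lp.norm_eq_ciSup]; exact hc
    obtain ⟨i0, hi0⟩ := (lt_ciSup_iff hb).1 hcs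
    set g : ℤ → ℂ := fun j => if j = -i0 then csgn ((f : ℤ → ℂ) i0) else 0 with hgdef
    have hgsupp : ∀ j ∉ ({-i0} : Finset ℤ), g j = 0 := by
      intro j hj
      rw [hgdef]
      exact if_neg (by simpa using hj)
    have hmem : Memℓp g 1 := memℓp_finsupp _ hgsupp
    refine ⟨⟨g, hmem⟩, ?_, ?_⟩
    · have hnorm := norm_finsupp_rpow (r := 1) (by norm_num) hgsupp hmem
      simp only [ENNReal.toReal_one, Real.rpow_one, Finset.sum_singleton] at hnorm
      rw [hnorm, hgdef]
      dsimp only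
      rw [if_pos rfl]
      exact norm_csgn_le _
    · have hval : pairT (f : ℤ → ℂ) g = ((‖(f : ℤ → ℂ) i0‖ : ℝ) : ℂ) := by
        rw [pairT, tsum_eq_sum (s := {i0}) (fun i hi => by
          rw [hgdef]; dsimp only
          rw [if_neg (fun hh => hi (by simpa using neg_injective hh)), mul_zero])]
        rw [Finset.sum_singleton, hgdef]
        dsimp only
        rw [if_pos rfl, mul_csgn]
      show c < ‖pairT (f : ℤ → ℂ) g‖
      rw [hval, Complex.norm_real, Real.norm_eq_abs, abs_of_nonneg (norm_nonneg _)]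
      exact hi0
  · -- 1 < r, s < ∞
    have hP : 0 < r.toReal := toReal_pos hrt
    have hQ : 0 < s.toReal := toReal_pos hst
    set P := r.toReal with hPdef
    set Q := s.toReal with hQdef
    have hfs : Summable fun i => ‖(f : ℤ → ℂ) i‖ ^ P := (lp.memℓp f).summable hP
    have hcP : c ^ P < ‖f‖ ^ P := Real.rpow_lt_rpow hc0 hc hP
    have hnf : ‖f‖ ^ P = ∑' i, ‖(f : ℤ → ℂ) i‖ ^ P := lp.norm_rpow_eq_tsum hP f
    obtain ⟨F, hF⟩ := exists_finset_sum_gt hfs (hnf ▸ hcP)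
    set S := ∑ i ∈ F, ‖(f : ℤ → ℂ) i‖ ^ P with hSdef
    have hS0 : 0 < S := lt_of_le_of_lt (Real.rpow_nonneg hc0 P) hF
    set t := S ^ (1 / P) with htdef
    have ht0 : 0 < t := Real.rpow_pos_of_pos hS0 _
    have htP : t ^ P = S := by
      rw [htdef, one_div, Real.rpow_inv_rpow hS0.le hP.ne']
    have hct : c < t := by
      have h1 : (c ^ P) ^ (1 / P) < S ^ (1 / P) :=
        Real.rpow_lt_rpow (Real.rpow_nonneg hc0 _) hF (by positivity)
      rw [htdef, one_div]
      rwa [one_div, Real.rpow_rpow_inv hc0 hP.ne'] at h1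
    set g : ℤ → ℂ := fun j => if -j ∈ F then
        (starRingEnd ℂ) ((f : ℤ → ℂ) (-j)) *
          ((‖(f : ℤ → ℂ) (-j)‖ ^ (P - 2) / t ^ (P - 1) : ℝ) : ℂ) else 0 with hgdef
    have hgsupp : ∀ j ∉ F.image (fun i => -i), g j = 0 := by
      intro j hj
      rw [hgdef]
      refine if_neg fun hmem => hj (Finset.mem_image.2 ⟨-j, hmem, by ring⟩)
    have hmem : Memℓp g s := memℓp_finsupp _ hgsupp
    -- entrywise norm computation
    have key : ∀ z : ℂ,
        ‖(starRingEnd ℂ) z * ((‖z‖ ^ (P - 2) / t ^ (P - 1) : ℝ) : ℂ)‖ ^ Q = ‖z‖ ^ P / t ^ P := by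
      intro z
      rcases eq_or_ne z 0 with rfl | hz
      · simp [Real.zero_rpow hQ.ne', Real.zero_rpow hP.ne']
      · have hz0 : 0 < ‖z‖ := norm_pos_iff.2 hz
        have hnum : (0:ℝ) ≤ ‖z‖ ^ (P - 2) / t ^ (P - 1) := by positivity
        rw [norm_mul, RCLike.norm_conj, Complex.norm_real, Real.norm_eq_abs,
          abs_of_nonneg hnum]
        have h1 : ‖z‖ * (‖z‖ ^ (P - 2) / t ^ (P - 1)) = ‖z‖ ^ (P - 1) / t ^ (P - 1) := by
          rw [← mul_div_assoc]
          congr 1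
          rw [show P - 1 = 1 + (P - 2) by ring, Real.rpow_add hz0, Real.rpow_one]
        rw [h1, Real.div_rpow (Real.rpow_nonneg (norm_nonneg _) _) (Real.rpow_nonneg ht0.le _),
          ← Real.rpow_mul (norm_nonneg z), ← Real.rpow_mul ht0.le, hcj.sub_one_mul_conj]
    -- entrywise value computation
    have key2 : ∀ z : ℂ, z * ((starRingEnd ℂ) z * ((‖z‖ ^ (P - 2) / t ^ (P - 1) : ℝ) : ℂ)) =
        ((‖z‖ ^ P / t ^ (P - 1) : ℝ) : ℂ) := by
      intro z
      rcases eq_or_ne z 0 with rfl | hz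
      · rw [zero_mul, norm_zero, Real.zero_rpow hP.ne', zero_div, Complex.ofReal_zero]
      · have hz0 : 0 < ‖z‖ := norm_pos_iff.2 hz
        rw [← mul_assoc, Complex.mul_conj, Complex.normSq_eq_norm_sq,
          ← Complex.ofReal_mul]
        congr 1
        rw [← mul_div_assoc]
        congr 1
        rw [← Real.rpow_natCast ‖z‖ 2, ← Real.rpow_add hz0]
        norm_num
    have hgnorm : ‖(⟨g, hmem⟩ : SeqZ s)‖ = 1 := by
      have h1 := norm_finsupp_rpow hst hgsupp hmem
      rw [Finset.sum_image (fun a _ b _ hab => neg_injective hab)] at h1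
      have h2 : ∀ i ∈ F, ‖g (-i)‖ ^ Q = ‖(f : ℤ → ℂ) i‖ ^ P / t ^ P := by
        intro i hi
        rw [hgdef]; dsimp only
        rw [neg_neg, if_pos hi]
        exact key _
      rw [Finset.sum_congr rfl h2, ← Finset.sum_div, ← hSdef, htP, div_self hS0.ne'] at h1
      have h3 : (‖(⟨g, hmem⟩ : SeqZ s)‖ ^ Q) ^ (1 / Q) = (1 : ℝ) ^ (1 / Q) := by rw [h1]
      rwa [one_div, Real.rpow_rpow_inv (norm_nonneg _) hQ.ne', Real.one_rpow] at h3
    have hval : pairT (f : ℤ → ℂ) g = ((t : ℝ) : ℂ) := by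
      rw [pairT, tsum_eq_sum (s := F) (fun i hi => by
        rw [hgdef]; dsimp only; rw [neg_neg, if_neg hi, mul_zero])]
      have hterm : ∀ i ∈ F, (f : ℤ → ℂ) i * g (-i) =
          ((‖(f : ℤ → ℂ) i‖ ^ P / t ^ (P - 1) : ℝ) : ℂ) := by
        intro i hi
        rw [hgdef]; dsimp only
        rw [neg_neg, if_pos hi]
        exact key2 _
      rw [Finset.sum_congr rfl hterm]
      norm_cast
      rw [← Finset.sum_div, ← hSdef, ← htP, ← Real.rpow_sub ht0,
        show P - (P - 1) = 1 by ring, Real.rpow_one]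
    refine ⟨⟨g, hmem⟩, le_of_eq hgnorm, ?_⟩
    show c < ‖pairT (f : ℤ → ℂ) g‖
    rw [hval, Complex.norm_real, Real.norm_eq_abs, abs_of_nonneg ht0.le]
    exact hct

end S9

end S9aux2

noncomputable section S9aux3

namespace S9

open scoped ENNReal

@[simp] lemma mk_apply {r : ℝ≥0∞} (g : ℤ → ℂ) (h : Memℓp g r) (i : ℤ) :
    ((⟨g, h⟩ : SeqZ r) : ℤ → ℂ) i = g i := rfl

lemma memℓp_mul_shift {r : ℝ≥0∞} [Fact (1 ≤ r)] {a : ℤ → ℂ} {C : ℝ} (ha : ∀ i, ‖a i‖ ≤ C)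
    (e : ℤ ≃ ℤ) (x : SeqZ r) : Memℓp (fun i => a i * (x : ℤ → ℂ) (e i)) r := by
  have hC : 0 ≤ C := (norm_nonneg _).trans (ha 0)
  rcases eq_or_ne r ∞ with rfl | htop
  · refine memℓp_infty ⟨C * ‖x‖, ?_⟩
    rintro y ⟨i, rfl⟩
    calc ‖a i * (x : ℤ → ℂ) (e i)‖ = ‖a i‖ * ‖(x : ℤ → ℂ) (e i)‖ := norm_mul _ _
      _ ≤ C * ‖x‖ :=
        mul_le_mul (ha i) (lp.norm_apply_le_norm (by norm_num) x (e i)) (norm_nonneg _) hC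
  · refine memℓp_gen ?_
    have hs : Summable fun i => ‖(x : ℤ → ℂ) (e i)‖ ^ r.toReal := by
      have := (lp.memℓp (reindex e x)).summable (toReal_pos htop)
      simpa only [reindex_coe] using this
    refine Summable.of_nonneg_of_le (fun i => by positivity) (fun i => ?_)
      (hs.mul_left (C ^ r.toReal))
    calc ‖a i * (x : ℤ → ℂ) (e i)‖ ^ r.toReal
        ≤ (C * ‖(x : ℤ → ℂ) (e i)‖) ^ r.toReal := by
          refine Real.rpow_le_rpow (norm_nonneg _) ?_ (toReal_pos htop).le
          rw [norm_mul]
          exact mul_le_mul_of_nonneg_right (ha i) (norm_nonneg _)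
      _ = C ^ r.toReal * ‖(x : ℤ → ℂ) (e i)‖ ^ r.toReal := Real.mul_rpow hC (norm_nonneg _)

lemma norm_mul_shift_le {r : ℝ≥0∞} [Fact (1 ≤ r)] {a : ℤ → ℂ} {C : ℝ} (ha : ∀ i, ‖a i‖ ≤ C)
    (e : ℤ ≃ ℤ) (x : SeqZ r) :
    ‖(⟨fun i => a i * (x : ℤ → ℂ) (e i), memℓp_mul_shift ha e x⟩ : SeqZ r)‖ ≤ C * ‖x‖ := by
  have hC : 0 ≤ C := (norm_nonneg _).trans (ha 0)
  have h := lp_norm_le_mul (⟨fun i => a i * (x : ℤ → ℂ) (e i), memℓp_mul_shift ha e x⟩ : SeqZ r)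
    (reindex e x) hC (fun i => by
      rw [mk_apply, reindex_coe, norm_mul]
      exact mul_le_mul_of_nonneg_right (ha i) (norm_nonneg _))
  rwa [norm_reindex] at h

lemma exists_triOp {r : ℝ≥0∞} [Fact (1 ≤ r)] {u v w : ℤ → ℂ} {Cu Cv Cw : ℝ}
    (hu : ∀ i, ‖u i‖ ≤ Cu) (hv : ∀ i, ‖v i‖ ≤ Cv) (hw : ∀ i, ‖w i‖ ≤ Cw) :
    ∃ A : SeqZ r →L[ℂ] SeqZ r, BiActs A u v w := by
  have e1 : ℤ ≃ ℤ := Equiv.refl ℤ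
  set s1 : ℤ ≃ ℤ := ⟨fun i => i - 1, fun i => i + 1, fun i => by
      show i - 1 + 1 = i; ring, fun i => by show i + 1 - 1 = i; ring⟩ with hs1
  set s3 : ℤ ≃ ℤ := ⟨fun i => i + 1, fun i => i - 1, fun i => by
      show i + 1 - 1 = i; ring, fun i => by show i - 1 + 1 = i; ring⟩ with hs3
  have mem : ∀ x : SeqZ r, Memℓp (fun i => u i * (x : ℤ → ℂ) (i - 1) + v i * (x : ℤ → ℂ) i
      + w i * (x : ℤ → ℂ) (i + 1)) r := fun x =>
    ((memℓp_mul_shift hu s1 x).add (memℓp_mul_shift hv (Equiv.refl ℤ) x)).add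
      (memℓp_mul_shift hw s3 x)
  let L : SeqZ r →ₗ[ℂ] SeqZ r :=
    { toFun := fun x => ⟨_, mem x⟩
      map_add' := fun x y => by
        apply lp.ext
        funext i
        simp only [mk_apply, lp.coeFn_add, Pi.add_apply]
        ring
      map_smul' := fun c x => by
        apply lp.ext
        funext i
        simp only [mk_apply, lp.coeFn_smul, Pi.smul_apply, smul_eq_mul, RingHom.id_apply]
        ring }
  have hbound : ∀ x : SeqZ r, ‖L x‖ ≤ (Cu + Cv + Cw) * ‖x‖ := by
    intro x
    have hsplit : L x =
        (⟨fun i => u i * (x : ℤ → ℂ) (s1 i), memℓp_mul_shift hu s1 x⟩ : SeqZ r)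
        + ⟨fun i => v i * (x : ℤ → ℂ) ((Equiv.refl ℤ) i), memℓp_mul_shift hv (Equiv.refl ℤ) x⟩
        + ⟨fun i => w i * (x : ℤ → ℂ) (s3 i), memℓp_mul_shift hw s3 x⟩ := by
      apply lp.ext
      funext i
      simp only [lp.coeFn_add, Pi.add_apply, mk_apply]
      rfl
    rw [hsplit]
    calc ‖_ + _ + _‖ ≤ ‖(⟨fun i => u i * (x : ℤ → ℂ) (s1 i), memℓp_mul_shift hu s1 x⟩ : SeqZ r)
          + ⟨fun i => v i * (x : ℤ → ℂ) ((Equiv.refl ℤ) i), memℓp_mul_shift hv (Equiv.refl ℤ) x⟩‖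
          + ‖(⟨fun i => w i * (x : ℤ → ℂ) (s3 i), memℓp_mul_shift hw s3 x⟩ : SeqZ r)‖ :=
            norm_add_le _ _
      _ ≤ (‖(⟨fun i => u i * (x : ℤ → ℂ) (s1 i), memℓp_mul_shift hu s1 x⟩ : SeqZ r)‖
          + ‖(⟨fun i => v i * (x : ℤ → ℂ) ((Equiv.refl ℤ) i),
              memℓp_mul_shift hv (Equiv.refl ℤ) x⟩ : SeqZ r)‖)
          + ‖(⟨fun i => w i * (x : ℤ → ℂ) (s3 i), memℓp_mul_shift hw s3 x⟩ : SeqZ r)‖ := by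
            gcongr
            exact norm_add_le _ _
      _ ≤ (Cu * ‖x‖ + Cv * ‖x‖) + Cw * ‖x‖ := by
            gcongr
            · exact norm_mul_shift_le hu s1 x
            · exact norm_mul_shift_le hv (Equiv.refl ℤ) x
            · exact norm_mul_shift_le hw s3 x
      _ = (Cu + Cv + Cw) * ‖x‖ := by ring
  refine ⟨L.mkContinuous (Cu + Cv + Cw) hbound, fun x i => rfl⟩

end S9

end S9aux3

noncomputable section S9aux4

namespace S9

open scoped ENNReal

lemma summable_piece {r s : ℝ≥0∞} [Fact (1 ≤ r)] [Fact (1 ≤ s)] (h : s.HolderConjugate r)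
    (x : SeqZ s) (z : SeqZ r) {a : ℤ → ℂ} {C : ℝ} (ha : ∀ i, ‖a i‖ ≤ C)
    (e₁ e₂ : ℤ ≃ ℤ) :
    Summable fun i => a i * (x : ℤ → ℂ) (e₁ i) * (z : ℤ → ℂ) (e₂ i) := by
  have hC : 0 ≤ C := (norm_nonneg _).trans (ha 0)
  have H := (holder_summable_le h x z (e₁.symm.trans e₂)).1
  have H2 : Summable fun i => ‖(x : ℤ → ℂ) (e₁ i)‖ * ‖(z : ℤ → ℂ) (e₂ i)‖ := by
    have h3 := (e₁.summable_iff
      (f := fun i => ‖(x : ℤ → ℂ) i‖ * ‖(z : ℤ → ℂ) ((e₁.symm.trans e₂) i)‖)).2 H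
    exact h3.congr fun i => by
      simp [Function.comp, Equiv.trans_apply, Equiv.symm_apply_apply]
  refine Summable.of_norm ?_
  refine Summable.of_nonneg_of_le (fun i => norm_nonneg _) (fun i => ?_) (H2.mul_left C)
  rw [norm_mul, norm_mul, mul_assoc]
  exact mul_le_mul_of_nonneg_right (ha i) (by positivity)

lemma pairT_eq {r s : ℝ≥0∞} [Fact (1 ≤ r)] [Fact (1 ≤ s)] (h : r.HolderConjugate s)
    {u v w : ℤ → ℂ} {Cu Cv Cw : ℝ}
    (hu : ∀ i, ‖u i‖ ≤ Cu) (hv : ∀ i, ‖v i‖ ≤ Cv) (hw : ∀ i, ‖w i‖ ≤ Cw)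
    {A : SeqZ r →L[ℂ] SeqZ r} (hA : BiActs A u v w)
    {A' : SeqZ s →L[ℂ] SeqZ s}
    (hA' : BiActs A' (fun i => u (1 - i)) (fun i => v (-i)) (fun i => w (-1 - i)))
    (x : SeqZ s) (z : SeqZ r) :
    pairT (A' x : ℤ → ℂ) (z : ℤ → ℂ) = pairT (x : ℤ → ℂ) (A z : ℤ → ℂ) := by
  set ng : ℤ ≃ ℤ := ⟨fun i => -i, fun i => -i, fun i => by
      show -(-i) = i; ring, fun i => by show -(-i) = i; ring⟩ with hng
  set sl1 : ℤ ≃ ℤ := ⟨fun i => 1 - i, fun i => 1 - i, fun i => by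
      show 1 - (1 - i) = i; ring, fun i => by show 1 - (1 - i) = i; ring⟩ with hsl1
  set sm1 : ℤ ≃ ℤ := ⟨fun i => -1 - i, fun i => -1 - i, fun i => by
      show -1 - (-1 - i) = i; ring, fun i => by show -1 - (-1 - i) = i; ring⟩ with hsm1
  set s1 : ℤ ≃ ℤ := ⟨fun i => i - 1, fun i => i + 1, fun i => by
      show i - 1 + 1 = i; ring, fun i => by show i + 1 - 1 = i; ring⟩ with hs1
  set s3 : ℤ ≃ ℤ := ⟨fun i => i + 1, fun i => i - 1, fun i => by
      show i + 1 - 1 = i; ring, fun i => by show i - 1 + 1 = i; ring⟩ with hs3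
  -- summability of the six pieces
  have S1 : Summable (fun i => u (1 - i) * (x : ℤ → ℂ) (i - 1) * (z : ℤ → ℂ) (-i)) :=
    (summable_piece h.symm x z (a := fun i => u (1 - i)) (fun i => hu (1 - i)) s1 ng).congr
      fun i => rfl
  have S2 : Summable (fun i => v (-i) * (x : ℤ → ℂ) i * (z : ℤ → ℂ) (-i)) :=
    (summable_piece h.symm x z (a := fun i => v (-i)) (fun i => hv (-i))
      (Equiv.refl ℤ) ng).congr fun i => rfl
  have S3 : Summable (fun i => w (-1 - i) * (x : ℤ → ℂ) (i + 1) * (z : ℤ → ℂ) (-i)) :=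
    (summable_piece h.symm x z (a := fun i => w (-1 - i)) (fun i => hw (-1 - i)) s3 ng).congr
      fun i => rfl
  have G1 : Summable (fun i => u i * (x : ℤ → ℂ) (-i) * (z : ℤ → ℂ) (i - 1)) :=
    (summable_piece h.symm x z hu ng s1).congr fun i => rfl
  have G2 : Summable (fun i => v i * (x : ℤ → ℂ) (-i) * (z : ℤ → ℂ) i) :=
    (summable_piece h.symm x z hv ng (Equiv.refl ℤ)).congr fun i => rfl
  have G3 : Summable (fun i => w i * (x : ℤ → ℂ) (-i) * (z : ℤ → ℂ) (i + 1)) :=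
    (summable_piece h.symm x z hw ng s3).congr fun i => rfl
  have hL : pairT (A' x : ℤ → ℂ) (z : ℤ → ℂ)
      = (∑' i, u (1 - i) * (x : ℤ → ℂ) (i - 1) * (z : ℤ → ℂ) (-i))
        + (∑' i, v (-i) * (x : ℤ → ℂ) i * (z : ℤ → ℂ) (-i))
        + (∑' i, w (-1 - i) * (x : ℤ → ℂ) (i + 1) * (z : ℤ → ℂ) (-i)) := by
    calc pairT (A' x : ℤ → ℂ) (z : ℤ → ℂ)
        = ∑' i, (u (1 - i) * (x : ℤ → ℂ) (i - 1) * (z : ℤ → ℂ) (-i)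
            + v (-i) * (x : ℤ → ℂ) i * (z : ℤ → ℂ) (-i)
            + w (-1 - i) * (x : ℤ → ℂ) (i + 1) * (z : ℤ → ℂ) (-i)) := by
          refine tsum_congr fun i => ?_
          rw [hA' x i]
          ring
      _ = _ := by rw [Summable.tsum_add (S1.add S2) S3, Summable.tsum_add S1 S2]
  have hR : pairT (x : ℤ → ℂ) (A z : ℤ → ℂ)
      = (∑' i, u i * (x : ℤ → ℂ) (-i) * (z : ℤ → ℂ) (i - 1))
        + (∑' i, v i * (x : ℤ → ℂ) (-i) * (z : ℤ → ℂ) i)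
        + (∑' i, w i * (x : ℤ → ℂ) (-i) * (z : ℤ → ℂ) (i + 1)) := by
    have e0 : pairT (x : ℤ → ℂ) (A z : ℤ → ℂ)
        = ∑' i, (x : ℤ → ℂ) (-i) * (A z : ℤ → ℂ) (- -i) :=
      (ng.tsum_eq (fun j => (x : ℤ → ℂ) j * (A z : ℤ → ℂ) (-j))).symm
    rw [e0]
    calc ∑' i, (x : ℤ → ℂ) (-i) * (A z : ℤ → ℂ) (- -i)
        = ∑' i, (u i * (x : ℤ → ℂ) (-i) * (z : ℤ → ℂ) (i - 1)
            + v i * (x : ℤ → ℂ) (-i) * (z : ℤ → ℂ) i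
            + w i * (x : ℤ → ℂ) (-i) * (z : ℤ → ℂ) (i + 1)) := by
          refine tsum_congr fun i => ?_
          rw [neg_neg, hA z i]
          ring
      _ = _ := by rw [Summable.tsum_add (G1.add G2) G3, Summable.tsum_add G1 G2]
  have hT1 : (∑' i, u (1 - i) * (x : ℤ → ℂ) (i - 1) * (z : ℤ → ℂ) (-i))
      = ∑' i, u i * (x : ℤ → ℂ) (-i) * (z : ℤ → ℂ) (i - 1) := by
    have h0 : ∑' j, u (1 - (1 - j)) * (x : ℤ → ℂ) ((1 - j) - 1) * (z : ℤ → ℂ) (-(1 - j))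
        = ∑' i, u (1 - i) * (x : ℤ → ℂ) (i - 1) * (z : ℤ → ℂ) (-i) :=
      sl1.tsum_eq (fun i => u (1 - i) * (x : ℤ → ℂ) (i - 1) * (z : ℤ → ℂ) (-i))
    rw [← h0]
    refine tsum_congr fun j => ?_
    rw [show (1 : ℤ) - (1 - j) = j by ring, show ((1 : ℤ) - j) - 1 = -j by ring,
      show -((1 : ℤ) - j) = j - 1 by ring]
  have hT2 : (∑' i, v (-i) * (x : ℤ → ℂ) i * (z : ℤ → ℂ) (-i))
      = ∑' i, v i * (x : ℤ → ℂ) (-i) * (z : ℤ → ℂ) i := by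
    have h0 : ∑' j, v (- -j) * (x : ℤ → ℂ) (-j) * (z : ℤ → ℂ) (- -j)
        = ∑' i, v (-i) * (x : ℤ → ℂ) i * (z : ℤ → ℂ) (-i) :=
      ng.tsum_eq (fun i => v (-i) * (x : ℤ → ℂ) i * (z : ℤ → ℂ) (-i))
    rw [← h0]
    refine tsum_congr fun j => ?_
    rw [neg_neg]
  have hT3 : (∑' i, w (-1 - i) * (x : ℤ → ℂ) (i + 1) * (z : ℤ → ℂ) (-i))
      = ∑' i, w i * (x : ℤ → ℂ) (-i) * (z : ℤ → ℂ) (i + 1) := by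
    have h0 : ∑' j, w (-1 - (-1 - j)) * (x : ℤ → ℂ) ((-1 - j) + 1) * (z : ℤ → ℂ) (-(-1 - j))
        = ∑' i, w (-1 - i) * (x : ℤ → ℂ) (i + 1) * (z : ℤ → ℂ) (-i) :=
      sm1.tsum_eq (fun i => w (-1 - i) * (x : ℤ → ℂ) (i + 1) * (z : ℤ → ℂ) (-i))
    rw [← h0]
    refine tsum_congr fun j => ?_
    rw [show (-1 : ℤ) - (-1 - j) = j by ring, show ((-1 : ℤ) - j) + 1 = -j by ring,
      show -((-1 : ℤ) - j) = j + 1 by ring]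
  rw [hL, hR, hT1, hT2, hT3]

lemma norm_transfer {r s : ℝ≥0∞} [Fact (1 ≤ r)] [Fact (1 ≤ s)] (h : r.HolderConjugate s)
    {u v w : ℤ → ℂ} {Cu Cv Cw : ℝ}
    (hu : ∀ i, ‖u i‖ ≤ Cu) (hv : ∀ i, ‖v i‖ ≤ Cv) (hw : ∀ i, ‖w i‖ ≤ Cw)
    {A : SeqZ r →L[ℂ] SeqZ r} (hA : BiActs A u v w)
    {A' : SeqZ s →L[ℂ] SeqZ s}
    (hA' : BiActs A' (fun i => u (1 - i)) (fun i => v (-i)) (fun i => w (-1 - i))) :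
    ‖A'‖ ≤ ‖A‖ := by
  refine ContinuousLinearMap.opNorm_le_bound _ (norm_nonneg A) fun x => ?_
  by_contra hlt
  push_neg at hlt
  obtain ⟨g, hg1, hgp⟩ := exists_dual_pair h.symm (A' x) hlt
  rw [pairT_eq h hu hv hw hA hA' x g] at hgp
  have h1 : ‖pairT (x : ℤ → ℂ) (A g : ℤ → ℂ)‖ ≤ ‖x‖ * ‖A g‖ := norm_pairT_le h.symm x (A g)
  have h4 : ‖A g‖ ≤ ‖A‖ := by
    have h2 : ‖A g‖ ≤ ‖A‖ * ‖g‖ := A.le_opNorm g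
    have h3 : ‖A‖ * ‖g‖ ≤ ‖A‖ * 1 := mul_le_mul_of_nonneg_left hg1 (norm_nonneg _)
    simpa using h2.trans h3
  have h5 : ‖x‖ * ‖A g‖ ≤ ‖A‖ * ‖x‖ := by
    calc ‖x‖ * ‖A g‖ ≤ ‖x‖ * ‖A‖ := mul_le_mul_of_nonneg_left h4 (norm_nonneg _)
      _ = ‖A‖ * ‖x‖ := mul_comm _ _
  exact absurd (hgp.trans_le (h1.trans h5)) (lt_irrefl _)

lemma inv_transfer {r s : ℝ≥0∞} [Fact (1 ≤ r)] [Fact (1 ≤ s)] (h : r.HolderConjugate s)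
    {u v w : ℤ → ℂ} {Cu Cv Cw : ℝ}
    (hu : ∀ i, ‖u i‖ ≤ Cu) (hv : ∀ i, ‖v i‖ ≤ Cv) (hw : ∀ i, ‖w i‖ ≤ Cw)
    {A : SeqZ r →L[ℂ] SeqZ r} (hA : BiActs A u v w)
    {A' : SeqZ s →L[ℂ] SeqZ s}
    (hA' : BiActs A' (fun i => u (1 - i)) (fun i => v (-i)) (fun i => w (-1 - i)))
    (hAu : IsUnit A) (hA'u : IsUnit A') :
    ‖Ring.inverse A'‖ ≤ ‖Ring.inverse A‖ := by
  refine ContinuousLinearMap.opNorm_le_bound _ (norm_nonneg _) fun a => ?_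
  by_contra hlt
  push_neg at hlt
  obtain ⟨y, hy1, hyp⟩ := exists_dual_pair h.symm (Ring.inverse A' a) hlt
  have hASy : A ((Ring.inverse A) y) = y := by
    have h0 := Ring.mul_inverse_cancel A hAu
    have h1 := congrArg (fun T : SeqZ r →L[ℂ] SeqZ r => T y) h0
    simpa [ContinuousLinearMap.mul_apply] using h1
  have hA'x : A' (Ring.inverse A' a) = a := by
    have h0 := Ring.mul_inverse_cancel A' hA'u
    have h1 := congrArg (fun T : SeqZ s →L[ℂ] SeqZ s => T a) h0
    simpa [ContinuousLinearMap.mul_apply] using h1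
  have key := pairT_eq h hu hv hw hA hA' (Ring.inverse A' a) (Ring.inverse A y)
  rw [hA'x, hASy] at key
  rw [← key] at hyp
  have h1 : ‖pairT (a : ℤ → ℂ) ((Ring.inverse A) y : ℤ → ℂ)‖ ≤ ‖a‖ * ‖(Ring.inverse A) y‖ :=
    norm_pairT_le h.symm a _
  have h4 : ‖(Ring.inverse A) y‖ ≤ ‖Ring.inverse A‖ := by
    have h2 : ‖(Ring.inverse A) y‖ ≤ ‖Ring.inverse A‖ * ‖y‖ := (Ring.inverse A).le_opNorm y
    have h3 : ‖Ring.inverse A‖ * ‖y‖ ≤ ‖Ring.inverse A‖ * 1 :=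
      mul_le_mul_of_nonneg_left hy1 (norm_nonneg _)
    simpa using h2.trans h3
  have h5 : ‖a‖ * ‖(Ring.inverse A) y‖ ≤ ‖Ring.inverse A‖ * ‖a‖ := by
    calc ‖a‖ * ‖(Ring.inverse A) y‖ ≤ ‖a‖ * ‖Ring.inverse A‖ :=
          mul_le_mul_of_nonneg_left h4 (norm_nonneg _)
      _ = ‖Ring.inverse A‖ * ‖a‖ := mul_comm _ _
  exact absurd (hyp.trans_le (h1.trans h5)) (lt_irrefl _)

end S9

end S9aux4

noncomputable section S9aux5

namespace S9

open scoped ENNReal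

lemma mnorm_set_subset {U V W : Set ℂ} {Cu Cv Cw : ℝ}
    (hCu : ∀ z ∈ U, ‖z‖ ≤ Cu) (hCv : ∀ z ∈ V, ‖z‖ ≤ Cv) (hCw : ∀ z ∈ W, ‖z‖ ≤ Cw)
    (r s : ℝ≥0∞) [Fact (1 ≤ r)] [Fact (1 ≤ s)] (h : r.HolderConjugate s) :
    {x : ℝ | ∃ B : SeqZ r →L[ℂ] SeqZ r, MemM U V W B ∧ x = ‖B‖}
      ⊆ {x : ℝ | ∃ B : SeqZ s →L[ℂ] SeqZ s, MemM U V W B ∧ x = ‖B‖} := by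
  rintro x ⟨B, ⟨u, v, w, ⟨hu, hv, hw⟩, hact⟩, rfl⟩
  have hub : ∀ i, ‖u i‖ ≤ Cu := fun i => hCu _ (hu i)
  have hvb : ∀ i, ‖v i‖ ≤ Cv := fun i => hCv _ (hv i)
  have hwb : ∀ i, ‖w i‖ ≤ Cw := fun i => hCw _ (hw i)
  have hub' : ∀ i, ‖u (1 - i)‖ ≤ Cu := fun i => hub _
  have hvb' : ∀ i, ‖v (-i)‖ ≤ Cv := fun i => hvb _
  have hwb' : ∀ i, ‖w (-1 - i)‖ ≤ Cw := fun i => hwb _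
  obtain ⟨A', hA'⟩ := exists_triOp (r := s) (u := fun i => u (1 - i)) (v := fun i => v (-i))
    (w := fun i => w (-1 - i)) hub' hvb' hwb'
  have hB' : BiActs B (fun i => u (1 - (1 - i))) (fun i => v (- -i))
      (fun i => w (-1 - (-1 - i))) := by
    have e1 : (fun i : ℤ => u (1 - (1 - i))) = u := by funext i; congr 1; ring
    have e2 : (fun i : ℤ => v (- -i)) = v := by funext i; congr 1; ring
    have e3 : (fun i : ℤ => w (-1 - (-1 - i))) = w := by funext i; congr 1; ring
    rw [e1, e2, e3]
    exact hact
  have hle1 : ‖A'‖ ≤ ‖B‖ := norm_transfer h hub hvb hwb hact hA'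
  have hle2 : ‖B‖ ≤ ‖A'‖ := norm_transfer h.symm hub' hvb' hwb' hA' hB'
  exact ⟨A', ⟨_, _, _, ⟨fun i => hu _, fun i => hv _, fun i => hw _⟩, hA'⟩,
    le_antisymm hle2 hle1⟩

lemma nnorm_set_subset {U V W : Set ℂ} {Cu Cv Cw : ℝ}
    (hCu : ∀ z ∈ U, ‖z‖ ≤ Cu) (hCv : ∀ z ∈ V, ‖z‖ ≤ Cv) (hCw : ∀ z ∈ W, ‖z‖ ≤ Cw)
    (hcomp : Compatible U V W)
    (r s : ℝ≥0∞) [Fact (1 ≤ r)] [Fact (1 ≤ s)] (h : r.HolderConjugate s) :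
    {x : ℝ | ∃ B : SeqZ r →L[ℂ] SeqZ r, MemM U V W B ∧ x = ‖Ring.inverse B‖}
      ⊆ {x : ℝ | ∃ B : SeqZ s →L[ℂ] SeqZ s, MemM U V W B ∧ x = ‖Ring.inverse B‖} := by
  rintro x ⟨B, ⟨u, v, w, ⟨hu, hv, hw⟩, hact⟩, rfl⟩
  have hub : ∀ i, ‖u i‖ ≤ Cu := fun i => hCu _ (hu i)
  have hvb : ∀ i, ‖v i‖ ≤ Cv := fun i => hCv _ (hv i)
  have hwb : ∀ i, ‖w i‖ ≤ Cw := fun i => hCw _ (hw i)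
  have hub' : ∀ i, ‖u (1 - i)‖ ≤ Cu := fun i => hub _
  have hvb' : ∀ i, ‖v (-i)‖ ≤ Cv := fun i => hvb _
  have hwb' : ∀ i, ‖w (-1 - i)‖ ≤ Cw := fun i => hwb _
  obtain ⟨A', hA'⟩ := exists_triOp (r := s) (u := fun i => u (1 - i)) (v := fun i => v (-i))
    (w := fun i => w (-1 - i)) hub' hvb' hwb'
  have hmemB : MemM U V W B := ⟨u, v, w, ⟨hu, hv, hw⟩, hact⟩
  have hmemA' : MemM U V W A' :=
    ⟨_, _, _, ⟨fun i => hu _, fun i => hv _, fun i => hw _⟩, hA'⟩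
  have hBu : IsUnit B := hcomp r B hmemB
  have hA'u : IsUnit A' := hcomp s A' hmemA'
  have hB' : BiActs B (fun i => u (1 - (1 - i))) (fun i => v (- -i))
      (fun i => w (-1 - (-1 - i))) := by
    have e1 : (fun i : ℤ => u (1 - (1 - i))) = u := by funext i; congr 1; ring
    have e2 : (fun i : ℤ => v (- -i)) = v := by funext i; congr 1; ring
    have e3 : (fun i : ℤ => w (-1 - (-1 - i))) = w := by funext i; congr 1; ring
    rw [e1, e2, e3]
    exact hact
  have hle1 : ‖Ring.inverse A'‖ ≤ ‖Ring.inverse B‖ :=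
    inv_transfer h hub hvb hwb hact hA' hBu hA'u
  have hle2 : ‖Ring.inverse B‖ ≤ ‖Ring.inverse A'‖ :=
    inv_transfer h.symm hub' hvb' hwb' hA' hB' hA'u hBu
  exact ⟨A', hmemA', le_antisymm hle2 hle1⟩

end S9

end S9aux5
/-- For conjugate exponents `p, q`: `M_p = M_q`, and if `(U,V,W)` is
compatible then also `N_p = N_q`. -/
theorem statement9 (U V W : Set ℂ)
    (hUne : U.Nonempty) (hUc : IsCompact U) (hVne : V.Nonempty) (hVc : IsCompact V)
    (hWne : W.Nonempty) (hWc : IsCompact W)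
    (p q : ℝ≥0∞) [Fact (1 ≤ p)] [Fact (1 ≤ q)] (hpq : 1 / p + 1 / q = 1) :
    Mnorm U V W p = Mnorm U V W q ∧
    (Compatible U V W → Nnorm U V W p = Nnorm U V W q) := by
  have hconj : p.HolderConjugate q := ENNReal.holderConjugate_iff.2 (by rw [← one_div, ← one_div]; exact hpq)
  obtain ⟨Cu, hCu⟩ := isBounded_iff_forall_norm_le.1 hUc.isBounded
  obtain ⟨Cv, hCv⟩ := isBounded_iff_forall_norm_le.1 hVc.isBounded
  obtain ⟨Cw, hCw⟩ := isBounded_iff_forall_norm_le.1 hWc.isBounded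
  constructor
  · have h1 := S9.mnorm_set_subset hCu hCv hCw p q hconj
    have h2 := S9.mnorm_set_subset hCu hCv hCw q p hconj.symm
    unfold Mnorm
    rw [subset_antisymm h1 h2]
  · intro hcomp
    have h1 := S9.nnorm_set_subset hCu hCv hCw hcomp p q hconj
    have h2 := S9.nnorm_set_subset hCu hCv hCw hcomp q p hconj.symm
    unfold Nnorm
    rw [subset_antisymm h1 h2]
end

section
/- Let U, V, W be nonempty compact subsets of ℂ and p ∈ [1,∞]. (a) For every A₊ ∈ PE₊(U,V,W), ‖A₊‖_p = max_{B₊ ∈ M₊(U,V,W)} ‖B₊‖_p = M_p. (b) If A₊ ∈ PE₊(U,V,W) is invertible, then ‖A₊⁻¹‖_p ≥ N_p. -/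
open scoped ENNReal

noncomputable section
namespace St10



variable {p : ℝ≥0∞} [Fact (1 ≤ p)] {ι κ : Type*}

lemma p_ne_zero : p ≠ 0 := by
  have h : (1:ℝ≥0∞) ≤ p := Fact.out
  exact fun h0 => by simp [h0] at h

lemma toReal_pos (hp : p ≠ ∞) : 0 < p.toReal :=
  ENNReal.toReal_pos p_ne_zero hp

/-- key finset-sum estimate, domination direction -/
lemma key_sum (hp : p ≠ ∞) (e : κ → ι) (he : Function.Injective e)
    (f : lp (fun _ : ι => ℂ) p) (g : κ → ℂ) {C : ℝ} (hC : 0 ≤ C)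
    (dom : ∀ k, ‖g k‖ ≤ C * ‖f (e k)‖) (s : Finset κ) :
    ∑ k ∈ s, ‖g k‖ ^ p.toReal ≤ (C * ‖f‖) ^ p.toReal := by
  classical
  have hq : 0 < p.toReal := toReal_pos hp
  calc ∑ k ∈ s, ‖g k‖ ^ p.toReal
      ≤ ∑ k ∈ s, (C * ‖f (e k)‖) ^ p.toReal := by
        refine Finset.sum_le_sum fun k _ => ?_
        exact Real.rpow_le_rpow (norm_nonneg _) (dom k) hq.le
    _ = ∑ k ∈ s, C ^ p.toReal * ‖f (e k)‖ ^ p.toReal := by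
        refine Finset.sum_congr rfl fun k _ => ?_
        exact Real.mul_rpow hC (norm_nonneg _)
    _ = C ^ p.toReal * ∑ i ∈ s.image e, ‖f i‖ ^ p.toReal := by
        rw [← Finset.mul_sum, Finset.sum_image (fun a _ b _ h => he h)]
    _ ≤ C ^ p.toReal * ‖f‖ ^ p.toReal := by
        refine mul_le_mul_of_nonneg_left ?_ (Real.rpow_nonneg hC _)
        exact lp.sum_rpow_le_norm_rpow hq f _
    _ = (C * ‖f‖) ^ p.toReal := (Real.mul_rpow hC (norm_nonneg _)).symm

lemma memℓp_dom (e : κ → ι) (he : Function.Injective e)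
    (f : lp (fun _ : ι => ℂ) p) (g : κ → ℂ) {C : ℝ} (hC : 0 ≤ C)
    (dom : ∀ k, ‖g k‖ ≤ C * ‖f (e k)‖) : Memℓp g p := by
  rcases eq_or_ne p ∞ with hp | hp
  · subst hp
    refine memℓp_infty ⟨C * ‖f‖, ?_⟩
    rintro - ⟨k, rfl⟩
    exact (dom k).trans (mul_le_mul_of_nonneg_left
      (lp.norm_apply_le_norm ENNReal.top_ne_zero f (e k)) hC)
  · exact memℓp_gen' (key_sum hp e he f g hC dom)

lemma norm_dom (e : κ → ι) (he : Function.Injective e)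
    (f : lp (fun _ : ι => ℂ) p) (g : lp (fun _ : κ => ℂ) p) {C : ℝ} (hC : 0 ≤ C)
    (dom : ∀ k, ‖g k‖ ≤ C * ‖f (e k)‖) : ‖g‖ ≤ C * ‖f‖ := by
  rcases eq_or_ne p ∞ with hp | hp
  · subst hp
    refine lp.norm_le_of_forall_le (mul_nonneg hC (norm_nonneg _)) fun k => ?_
    exact (dom k).trans (mul_le_mul_of_nonneg_left
      (lp.norm_apply_le_norm ENNReal.top_ne_zero f (e k)) hC)
  · exact lp.norm_le_of_forall_sum_le (toReal_pos hp) (mul_nonneg hC (norm_nonneg _))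
      (key_sum hp e he f (g : ∀ _ : κ, ℂ) hC dom)

/-- key finset-sum estimate, reverse (vanishing off range) direction -/
lemma key_sum' (hp : p ≠ ∞) (e : κ → ι) (he : Function.Injective e)
    (g : lp (fun _ : κ => ℂ) p) (f : ι → ℂ) {C : ℝ} (hC : 0 ≤ C)
    (hvan : ∀ i, (∀ k, e k ≠ i) → f i = 0)
    (dom : ∀ k, ‖f (e k)‖ ≤ C * ‖g k‖) (s : Finset ι) :
    ∑ i ∈ s, ‖f i‖ ^ p.toReal ≤ (C * ‖g‖) ^ p.toReal := by
  classical
  have hq : 0 < p.toReal := toReal_pos hp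
  set t : Finset κ := s.preimage e (he.injOn) with ht
  have hsub : t.image e ⊆ s := by
    intro i hi
    rcases Finset.mem_image.1 hi with ⟨k, hk, rfl⟩
    exact (Finset.mem_preimage).1 hk
  have hzero : ∀ i ∈ s, i ∉ t.image e → ‖f i‖ ^ p.toReal = 0 := by
    intro i his hit
    have : f i = 0 := by
      by_contra hne
      rcases not_forall.1 (fun h => hne (hvan i h)) with ⟨k, hk⟩
      have hek : e k = i := not_not.1 hk
      exact hit (Finset.mem_image.2 ⟨k, Finset.mem_preimage.2 (hek ▸ his), hek⟩)
    rw [this]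
    simp [Real.zero_rpow hq.ne']
  have h1 : ∑ i ∈ s, ‖f i‖ ^ p.toReal = ∑ i ∈ t.image e, ‖f i‖ ^ p.toReal :=
    (Finset.sum_subset hsub (fun i hi hit => hzero i hi hit)).symm
  rw [h1, Finset.sum_image (fun a _ b _ h => he h)]
  calc ∑ k ∈ t, ‖f (e k)‖ ^ p.toReal
      ≤ ∑ k ∈ t, C ^ p.toReal * ‖g k‖ ^ p.toReal := by
        refine Finset.sum_le_sum fun k _ => ?_
        rw [← Real.mul_rpow hC (norm_nonneg _)]
        exact Real.rpow_le_rpow (norm_nonneg _) (dom k) hq.le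
    _ = C ^ p.toReal * ∑ k ∈ t, ‖g k‖ ^ p.toReal := by rw [Finset.mul_sum]
    _ ≤ C ^ p.toReal * ‖g‖ ^ p.toReal := by
        refine mul_le_mul_of_nonneg_left ?_ (Real.rpow_nonneg hC _)
        exact lp.sum_rpow_le_norm_rpow hq g _
    _ = (C * ‖g‖) ^ p.toReal := (Real.mul_rpow hC (norm_nonneg _)).symm

lemma memℓp_dom' (e : κ → ι) (he : Function.Injective e)
    (g : lp (fun _ : κ => ℂ) p) (f : ι → ℂ) {C : ℝ} (hC : 0 ≤ C)
    (hvan : ∀ i, (∀ k, e k ≠ i) → f i = 0)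
    (dom : ∀ k, ‖f (e k)‖ ≤ C * ‖g k‖) : Memℓp f p := by
  rcases eq_or_ne p ∞ with hp | hp
  · subst hp
    refine memℓp_infty ⟨C * ‖g‖, ?_⟩
    rintro - ⟨i, rfl⟩
    by_cases h : ∀ k, e k ≠ i
    · show ‖f i‖ ≤ _
      rw [hvan i h, norm_zero]
      exact mul_nonneg hC (norm_nonneg _)
    · rcases not_forall.1 h with ⟨k, hk⟩
      have hek : e k = i := not_not.1 hk
      show ‖f i‖ ≤ _
      rw [← hek]
      exact (dom k).trans (mul_le_mul_of_nonneg_left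
        (lp.norm_apply_le_norm ENNReal.top_ne_zero g k) hC)
  · exact memℓp_gen' (key_sum' hp e he g f hC hvan dom)

lemma norm_dom' (e : κ → ι) (he : Function.Injective e)
    (g : lp (fun _ : κ => ℂ) p) (f : lp (fun _ : ι => ℂ) p) {C : ℝ} (hC : 0 ≤ C)
    (hvan : ∀ i, (∀ k, e k ≠ i) → f i = 0)
    (dom : ∀ k, ‖f (e k)‖ ≤ C * ‖g k‖) : ‖f‖ ≤ C * ‖g‖ := by
  rcases eq_or_ne p ∞ with hp | hp
  · subst hp
    refine lp.norm_le_of_forall_le (mul_nonneg hC (norm_nonneg _)) fun i => ?_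
    by_cases h : ∀ k, e k ≠ i
    · rw [hvan i h, norm_zero]
      exact mul_nonneg hC (norm_nonneg _)
    · rcases not_forall.1 h with ⟨k, hk⟩
      have hek : e k = i := not_not.1 hk
      rw [← hek]
      exact (dom k).trans (mul_le_mul_of_nonneg_left
        (lp.norm_apply_le_norm ENNReal.top_ne_zero g k) hC)
  · exact lp.norm_le_of_forall_sum_le (toReal_pos hp) (mul_nonneg hC (norm_nonneg _))
      (key_sum' hp e he g (f : ∀ _ : ι, ℂ) hC hvan dom)


-- finitely supported functions are in ℓᵖ
lemma memℓp_finsupp (S : Finset ι) (h : ι → ℂ) (hfs : ∀ i ∉ S, h i = 0) :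
    Memℓp h p := by
  classical
  rcases eq_or_ne p ∞ with hp | hp
  · subst hp
    refine memℓp_infty ⟨∑ i ∈ S, ‖h i‖, ?_⟩
    rintro - ⟨i, rfl⟩
    by_cases hi : i ∈ S
    · exact Finset.single_le_sum (fun j _ => norm_nonneg (h j)) hi
    · show ‖h i‖ ≤ _
      rw [hfs i hi, norm_zero]
      exact Finset.sum_nonneg fun j _ => norm_nonneg _
  · have hq : 0 < p.toReal := ENNReal.toReal_pos
      (fun h0 => by have h1 : (1:ℝ≥0∞) ≤ p := Fact.out; simp [h0] at h1) hp
    refine memℓp_gen' (C := ∑ i ∈ S, ‖h i‖ ^ p.toReal) fun s => ?_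
    have h1 : ∑ i ∈ s, ‖h i‖ ^ p.toReal = ∑ i ∈ s ∩ S, ‖h i‖ ^ p.toReal := by
      refine (Finset.sum_subset (Finset.inter_subset_left) fun i hi hi' => ?_).symm
      have : i ∉ S := fun hS => hi' (Finset.mem_inter.2 ⟨hi, hS⟩)
      rw [hfs i this, norm_zero, Real.zero_rpow hq.ne']
    rw [h1]
    exact Finset.sum_le_sum_of_subset_of_nonneg (Finset.inter_subset_right)
      (fun i _ _ => Real.rpow_nonneg (norm_nonneg _) _)

section Seq

variable {u v w : ℤ → ℂ} {Ku Kv Kw : ℝ}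

lemma memℓp_sub (x : SeqZ p) (hKu : 0 ≤ Ku) (hu : ∀ i, ‖u i‖ ≤ Ku) :
    Memℓp (fun i : ℤ => u i * (x : ∀ _ : ℤ, ℂ) (i - 1)) p :=
  memℓp_dom (fun i : ℤ => i - 1) sub_left_injective x _ hKu fun i => by
    rw [norm_mul]
    exact mul_le_mul_of_nonneg_right (hu i) (norm_nonneg _)

lemma memℓp_diag (x : SeqZ p) (hKv : 0 ≤ Kv) (hv : ∀ i, ‖v i‖ ≤ Kv) :
    Memℓp (fun i : ℤ => v i * (x : ∀ _ : ℤ, ℂ) i) p :=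
  memℓp_dom (fun i : ℤ => i) (fun a b h => h) x _ hKv fun i => by
    rw [norm_mul]
    exact mul_le_mul_of_nonneg_right (hv i) (norm_nonneg _)

lemma memℓp_sup (x : SeqZ p) (hKw : 0 ≤ Kw) (hw : ∀ i, ‖w i‖ ≤ Kw) :
    Memℓp (fun i : ℤ => w i * (x : ∀ _ : ℤ, ℂ) (i + 1)) p :=
  memℓp_dom (fun i : ℤ => i + 1) (add_left_injective 1) x _ hKw fun i => by
    rw [norm_mul]
    exact mul_le_mul_of_nonneg_right (hw i) (norm_nonneg _)

/-- norm bound for any operator acting tridiagonally on ℓᵖ(ℤ) -/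
lemma biacts_bound (B : SeqZ p →L[ℂ] SeqZ p)
    (hB : ∀ (x : SeqZ p) (i : ℤ),
      (B x : ∀ _ : ℤ, ℂ) i =
        u i * (x : ∀ _ : ℤ, ℂ) (i - 1) + v i * (x : ∀ _ : ℤ, ℂ) i +
          w i * (x : ∀ _ : ℤ, ℂ) (i + 1))
    (hKu : 0 ≤ Ku) (hu : ∀ i, ‖u i‖ ≤ Ku) (hKv : 0 ≤ Kv) (hv : ∀ i, ‖v i‖ ≤ Kv)
    (hKw : 0 ≤ Kw) (hw : ∀ i, ‖w i‖ ≤ Kw) : ‖B‖ ≤ Ku + Kv + Kw := by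
  refine B.opNorm_le_bound (by linarith) fun x => ?_
  set g₁ : SeqZ p := ⟨_, memℓp_sub x hKu hu⟩
  set g₂ : SeqZ p := ⟨_, memℓp_diag x hKv hv⟩
  set g₃ : SeqZ p := ⟨_, memℓp_sup x hKw hw⟩
  have hsum : B x = g₁ + g₂ + g₃ := by
    apply lp.ext
    funext i
    exact hB x i
  have h1 : ‖g₁‖ ≤ Ku * ‖x‖ := norm_dom (fun i : ℤ => i - 1) sub_left_injective
    x g₁ hKu fun i => by
      rw [norm_mul]; exact mul_le_mul_of_nonneg_right (hu i) (norm_nonneg _)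
  have h2 : ‖g₂‖ ≤ Kv * ‖x‖ := norm_dom (fun i : ℤ => i) (fun a b h => h)
    x g₂ hKv fun i => by
      rw [norm_mul]; exact mul_le_mul_of_nonneg_right (hv i) (norm_nonneg _)
  have h3 : ‖g₃‖ ≤ Kw * ‖x‖ := norm_dom (fun i : ℤ => i + 1) (add_left_injective 1)
    x g₃ hKw fun i => by
      rw [norm_mul]; exact mul_le_mul_of_nonneg_right (hw i) (norm_nonneg _)
  calc ‖B x‖ = ‖g₁ + g₂ + g₃‖ := by rw [hsum]
    _ ≤ ‖g₁‖ + ‖g₂‖ + ‖g₃‖ := norm_add₃_le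
    _ ≤ Ku * ‖x‖ + Kv * ‖x‖ + Kw * ‖x‖ := by linarith
    _ = (Ku + Kv + Kw) * ‖x‖ := by ring

/-- existence of the tridiagonal operator on ℓᵖ(ℤ) with given bounded diagonals -/
lemma exists_biOp (hKu : 0 ≤ Ku) (hu : ∀ i, ‖u i‖ ≤ Ku) (hKv : 0 ≤ Kv)
    (hv : ∀ i, ‖v i‖ ≤ Kv) (hKw : 0 ≤ Kw) (hw : ∀ i, ‖w i‖ ≤ Kw) :
    ∃ B : SeqZ p →L[ℂ] SeqZ p, ∀ (x : SeqZ p) (i : ℤ),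
      (B x : ∀ _ : ℤ, ℂ) i =
        u i * (x : ∀ _ : ℤ, ℂ) (i - 1) + v i * (x : ∀ _ : ℤ, ℂ) i +
          w i * (x : ∀ _ : ℤ, ℂ) (i + 1) := by
  have mem : ∀ x : SeqZ p, Memℓp (fun i : ℤ =>
      u i * (x : ∀ _ : ℤ, ℂ) (i - 1) + v i * (x : ∀ _ : ℤ, ℂ) i +
        w i * (x : ∀ _ : ℤ, ℂ) (i + 1)) p := fun x =>
    ((memℓp_sub x hKu hu).add (memℓp_diag x hKv hv)).add (memℓp_sup x hKw hw)
  set T₀ : SeqZ p →ₗ[ℂ] SeqZ p :=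
    { toFun := fun x => ⟨_, mem x⟩
      map_add' := fun x y => by
        apply lp.ext
        funext i
        simp only [lp.coeFn_add, Pi.add_apply]
        ring
      map_smul' := fun c x => by
        apply lp.ext
        funext i
        simp only [lp.coeFn_smul, Pi.smul_apply, smul_eq_mul, RingHom.id_apply]
        ring } with hT₀
  have hbound : ∀ x : SeqZ p, ‖T₀ x‖ ≤ (Ku + Kv + Kw) * ‖x‖ := by
    intro x
    set g₁ : SeqZ p := ⟨_, memℓp_sub x hKu hu⟩
    set g₂ : SeqZ p := ⟨_, memℓp_diag x hKv hv⟩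
    set g₃ : SeqZ p := ⟨_, memℓp_sup x hKw hw⟩
    have hsum : T₀ x = g₁ + g₂ + g₃ := by
      apply lp.ext; funext i; rfl
    have h1 : ‖g₁‖ ≤ Ku * ‖x‖ := norm_dom (fun i : ℤ => i - 1) sub_left_injective
      x g₁ hKu fun i => by
        rw [norm_mul]; exact mul_le_mul_of_nonneg_right (hu i) (norm_nonneg _)
    have h2 : ‖g₂‖ ≤ Kv * ‖x‖ := norm_dom (fun i : ℤ => i) (fun a b h => h)
      x g₂ hKv fun i => by
        rw [norm_mul]; exact mul_le_mul_of_nonneg_right (hv i) (norm_nonneg _)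
    have h3 : ‖g₃‖ ≤ Kw * ‖x‖ := norm_dom (fun i : ℤ => i + 1) (add_left_injective 1)
      x g₃ hKw fun i => by
        rw [norm_mul]; exact mul_le_mul_of_nonneg_right (hw i) (norm_nonneg _)
    calc ‖T₀ x‖ = ‖g₁ + g₂ + g₃‖ := by rw [hsum]
      _ ≤ ‖g₁‖ + ‖g₂‖ + ‖g₃‖ := norm_add₃_le
      _ ≤ (Ku + Kv + Kw) * ‖x‖ := by nlinarith [norm_nonneg x]
  exact ⟨T₀.mkContinuous (Ku + Kv + Kw) hbound, fun x i => rfl⟩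

end Seq

open scoped ENNReal


variable {p : ℝ≥0∞} [Fact (1 ≤ p)]

set_option maxHeartbeats 1000000 in
/-- The fundamental transfer lemma. -/
lemma transfer {U V W : Set ℂ}
    (A : SeqN p →L[ℂ] SeqN p) (au av aw : ℕ → ℂ)
    (hpe : PseudoergodicN U V W au av aw) (hActs : SemiActs A au av aw)
    (bu bv bw : ℤ → ℂ) (hbr : RangesIn U V W bu bv bw)
    (B : SeqZ p →L[ℂ] SeqZ p) (hB : BiActs B bu bv bw)
    (x : SeqZ p) (l r : ℤ) (hsupp : ∀ i : ℤ, (x : ∀ _ : ℤ, ℂ) i ≠ 0 → l ≤ i ∧ i ≤ r)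
    {ε : ℝ} (hε : 0 < ε) :
    ∃ y : SeqN p, ‖y‖ = ‖x‖ ∧ ‖B x‖ ≤ ‖A y‖ + 3 * ε * ‖x‖ ∧
      ‖A y‖ ≤ ‖B x‖ + 3 * ε * ‖x‖ := by
  by_cases hlr : l ≤ r
  swap
  · -- x = 0
    have hx : x = 0 := by
      apply lp.ext
      funext i
      by_contra h
      obtain ⟨h1, h2⟩ := hsupp i h
      exact hlr (le_trans h1 h2)
    refine ⟨0, ?_, ?_, ?_⟩ <;>
      simp [hx, map_zero, norm_zero]
  -- main case
  set n : ℕ := (r - l + 3).toNat with hn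
  have hncast : (n : ℤ) = r - l + 3 := Int.toNat_of_nonneg (by omega)
  obtain ⟨k, hk⟩ := hpe n (fun t => bu (l - 1 + (t : ℕ))) (fun t => bv (l - 1 + (t : ℕ)))
    (fun t => bw (l - 1 + (t : ℕ)))
    ⟨fun t => hbr.1 _, fun t => hbr.2.1 _, fun t => hbr.2.2 _⟩ ε hε
  set e : ℕ → ℤ := fun m => (m : ℤ) - k - 1 + l with he_def
  have he' : ∀ m : ℕ, e m = (m : ℤ) - k - 1 + l := fun _ => rfl
  have he : Function.Injective e := fun a b h => by
    have h' : (a : ℤ) - k - 1 + l = (b : ℤ) - k - 1 + l := h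
    omega
  have hxlt : ∀ j : ℤ, j < l → (x : ∀ _ : ℤ, ℂ) j = 0 := fun j hj => by
    by_contra h
    exact absurd (hsupp j h).1 (by omega)
  have hxgt : ∀ j : ℤ, r < j → (x : ∀ _ : ℤ, ℂ) j = 0 := fun j hj => by
    by_contra h
    exact absurd (hsupp j h).2 (by omega)
  -- the shifted copy y of x
  set y : ℕ → ℂ := fun m => (x : ∀ _ : ℤ, ℂ) (e m) with hy_def
  have hy_dom : ∀ m, ‖y m‖ ≤ 1 * ‖(x : ∀ _ : ℤ, ℂ) (e m)‖ := fun m => by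
    rw [one_mul]
  set Y : SeqN p := ⟨y, memℓp_dom e he x y zero_le_one hy_dom⟩ with hY_def
  have hYx : ‖Y‖ = ‖x‖ := by
    refine le_antisymm ?_ ?_
    · have h' := norm_dom e he x Y zero_le_one hy_dom
      rwa [one_mul] at h'
    · have := norm_dom' e he Y x zero_le_one
        (fun i hi => by
          by_contra h
          obtain ⟨h1, h2⟩ := hsupp i h
          refine hi (i + k + 1 - l).toNat ?_
          have hcast : (((i + k + 1 - l).toNat : ℤ)) = i + k + 1 - l :=
            Int.toNat_of_nonneg (by omega)
          show ((i + k + 1 - l).toNat : ℤ) - k - 1 + l = i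
          omega)
        (fun m => by rw [one_mul])
      rwa [one_mul] at this
  -- the shifted copy G of B x
  set g : ℕ → ℂ := fun m => (B x : ∀ _ : ℤ, ℂ) (e m) with hg_def
  have hg_dom : ∀ m, ‖g m‖ ≤ 1 * ‖(B x : ∀ _ : ℤ, ℂ) (e m)‖ := fun m => by rw [one_mul]
  set G : SeqN p := ⟨g, memℓp_dom e he (B x) g zero_le_one hg_dom⟩ with hG_def
  have hBx_van : ∀ i : ℤ, (∀ m : ℕ, e m ≠ i) → (B x : ∀ _ : ℤ, ℂ) i = 0 := by
    intro i hi
    have hil : i < l - 1 := by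
      by_contra h
      refine hi (i + k + 1 - l).toNat ?_
      have hcast : (((i + k + 1 - l).toNat : ℤ)) = i + k + 1 - l :=
        Int.toNat_of_nonneg (by omega)
      show ((i + k + 1 - l).toNat : ℤ) - k - 1 + l = i
      omega
    rw [hB x i, hxlt (i - 1) (by omega), hxlt i (by omega), hxlt (i + 1) (by omega)]
    ring
  have hGBx : ‖G‖ = ‖B x‖ := by
    refine le_antisymm ?_ ?_
    · have h' := norm_dom e he (B x) G zero_le_one hg_dom
      rwa [one_mul] at h'
    · have h' := norm_dom' e he G (B x) zero_le_one hBx_van (fun m => by rw [one_mul])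
      rwa [one_mul] at h'
  -- the three difference sequences
  set D₁ : ℕ → ℂ := fun m =>
    if m = 0 then 0 else (au m - bu (e m)) * (x : ∀ _ : ℤ, ℂ) (e m - 1) with hD₁_def
  set D₂ : ℕ → ℂ := fun m => (av m - bv (e m)) * (x : ∀ _ : ℤ, ℂ) (e m) with hD₂_def
  set D₃ : ℕ → ℂ := fun m => (aw m - bw (e m)) * (x : ∀ _ : ℤ, ℂ) (e m + 1) with hD₃_def
  -- pointwise bounds
  have hD₁_dom : ∀ m, ‖D₁ m‖ ≤ ε * ‖(x : ∀ _ : ℤ, ℂ) (e m - 1)‖ := by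
    intro m
    by_cases hm : m = 0
    · simp only [hD₁_def, if_pos hm, norm_zero]
      
      positivity
    simp only [hD₁_def, if_neg hm]
    by_cases hx0 : (x : ∀ _ : ℤ, ℂ) (e m - 1) = 0
    · rw [hx0, norm_zero, mul_zero, mul_zero]
      simp
    obtain ⟨h1, h2⟩ := hsupp _ hx0
    rw [he'] at h1 h2
    have htlt : m - k < n := by omega
    have ht := (hk ⟨m - k, htlt⟩).1
    have hkm : k + (m - k) = m := by omega
    rw [show ((⟨m - k, htlt⟩ : Fin n) : ℕ) = m - k from rfl, hkm] at ht
    have harg : l - 1 + ((m - k : ℕ) : ℤ) = e m := by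
      rw [he']
      omega
    rw [harg] at ht
    rw [norm_mul]
    exact mul_le_mul_of_nonneg_right ht.le (norm_nonneg _)
  have hD₂_dom : ∀ m, ‖D₂ m‖ ≤ ε * ‖(x : ∀ _ : ℤ, ℂ) (e m)‖ := by
    intro m
    simp only [hD₂_def]
    by_cases hx0 : (x : ∀ _ : ℤ, ℂ) (e m) = 0
    · rw [hx0, norm_zero, mul_zero, mul_zero]
      simp
    obtain ⟨h1, h2⟩ := hsupp _ hx0
    rw [he'] at h1 h2
    have htlt : m - k < n := by omega
    have ht := (hk ⟨m - k, htlt⟩).2.1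
    have hkm : k + (m - k) = m := by omega
    rw [show ((⟨m - k, htlt⟩ : Fin n) : ℕ) = m - k from rfl, hkm] at ht
    have harg : l - 1 + ((m - k : ℕ) : ℤ) = e m := by
      rw [he']
      omega
    rw [harg] at ht
    rw [norm_mul]
    exact mul_le_mul_of_nonneg_right ht.le (norm_nonneg _)
  have hD₃_dom : ∀ m, ‖D₃ m‖ ≤ ε * ‖(x : ∀ _ : ℤ, ℂ) (e m + 1)‖ := by
    intro m
    simp only [hD₃_def]
    by_cases hx0 : (x : ∀ _ : ℤ, ℂ) (e m + 1) = 0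
    · rw [hx0, norm_zero, mul_zero, mul_zero]
      simp
    obtain ⟨h1, h2⟩ := hsupp _ hx0
    rw [he'] at h1 h2
    have htlt : m - k < n := by omega
    have ht := (hk ⟨m - k, htlt⟩).2.2
    have hkm : k + (m - k) = m := by omega
    rw [show ((⟨m - k, htlt⟩ : Fin n) : ℕ) = m - k from rfl, hkm] at ht
    have harg : l - 1 + ((m - k : ℕ) : ℤ) = e m := by
      rw [he']
      omega
    rw [harg] at ht
    rw [norm_mul]
    exact mul_le_mul_of_nonneg_right ht.le (norm_nonneg _)
  -- embeddings for D₁ and D₃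
  have he₁ : Function.Injective (fun m : ℕ => e m - 1) := fun a b h => by
    have h' : (a : ℤ) - k - 1 + l - 1 = (b : ℤ) - k - 1 + l - 1 := h
    omega
  have he₃ : Function.Injective (fun m : ℕ => e m + 1) := fun a b h => by
    have h' : (a : ℤ) - k - 1 + l + 1 = (b : ℤ) - k - 1 + l + 1 := h
    omega
  set Δ₁ : SeqN p := ⟨D₁, memℓp_dom _ he₁ x D₁ hε.le hD₁_dom⟩
  set Δ₂ : SeqN p := ⟨D₂, memℓp_dom e he x D₂ hε.le hD₂_dom⟩
  set Δ₃ : SeqN p := ⟨D₃, memℓp_dom _ he₃ x D₃ hε.le hD₃_dom⟩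
  have hΔ₁ : ‖Δ₁‖ ≤ ε * ‖x‖ := norm_dom _ he₁ x Δ₁ hε.le hD₁_dom
  have hΔ₂ : ‖Δ₂‖ ≤ ε * ‖x‖ := norm_dom e he x Δ₂ hε.le hD₂_dom
  have hΔ₃ : ‖Δ₃‖ ≤ ε * ‖x‖ := norm_dom _ he₃ x Δ₃ hε.le hD₃_dom
  -- the difference identity
  have hid : A Y - G = Δ₁ + Δ₂ + Δ₃ := by
    apply lp.ext
    funext m
    have hAY := hActs Y m
    have hBG := hB x (e m)
    have hYm : (Y : ∀ _ : ℕ, ℂ) m = (x : ∀ _ : ℤ, ℂ) (e m) := rfl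
    have hidx1 : ((m + 1 : ℕ) : ℤ) - k - 1 + l = e m + 1 := by
      rw [he']
      push_cast
      ring
    have hYm1 : (Y : ∀ _ : ℕ, ℂ) (m + 1) = (x : ∀ _ : ℤ, ℂ) (e m + 1) := by
      show (x : ∀ _ : ℤ, ℂ) (((m + 1 : ℕ) : ℤ) - k - 1 + l) = _
      rw [hidx1]
    show (A Y : ∀ _ : ℕ, ℂ) m - g m = D₁ m + D₂ m + D₃ m
    simp only [hg_def, hD₁_def, hD₂_def, hD₃_def]
    rw [hAY, hBG, hYm, hYm1]
    by_cases hm : m = 0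
    · subst hm
      have hx1 : (x : ∀ _ : ℤ, ℂ) (e 0 - 1) = 0 := hxlt _ (by rw [he']; omega)
      rw [hx1, if_pos (rfl : (0:ℕ) = 0), if_pos (rfl : (0:ℕ) = 0)]
      ring
    · have hm1 : 1 ≤ m := Nat.one_le_iff_ne_zero.2 hm
      have hidx0 : ((m - 1 : ℕ) : ℤ) - k - 1 + l = e m - 1 := by
        rw [he']
        omega
      have hYm0 : (Y : ∀ _ : ℕ, ℂ) (m - 1) = (x : ∀ _ : ℤ, ℂ) (e m - 1) := by
        show (x : ∀ _ : ℤ, ℂ) (((m - 1 : ℕ) : ℤ) - k - 1 + l) = _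
        rw [hidx0]
      have hYm0y : y (m - 1) = (x : ∀ _ : ℤ, ℂ) (e m - 1) := hYm0
      simp only [if_neg hm, hYm0, hYm0y]
      ring
  have hdiff : ‖A Y - G‖ ≤ 3 * ε * ‖x‖ := by
    rw [hid]
    calc ‖Δ₁ + Δ₂ + Δ₃‖ ≤ ‖Δ₁‖ + ‖Δ₂‖ + ‖Δ₃‖ := norm_add₃_le
      _ ≤ ε * ‖x‖ + ε * ‖x‖ + ε * ‖x‖ := by linarith
      _ = 3 * ε * ‖x‖ := by ring
  refine ⟨Y, hYx, ?_, ?_⟩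
  · calc ‖B x‖ = ‖G‖ := hGBx.symm
      _ = ‖A Y - (A Y - G)‖ := by rw [sub_sub_cancel]
      _ ≤ ‖A Y‖ + ‖A Y - G‖ := norm_sub_le _ _
      _ ≤ ‖A Y‖ + 3 * ε * ‖x‖ := by linarith
  · calc ‖A Y‖ = ‖G + (A Y - G)‖ := by rw [add_sub_cancel]
      _ ≤ ‖G‖ + ‖A Y - G‖ := norm_add_le _ _
      _ ≤ ‖B x‖ + 3 * ε * ‖x‖ := by rw [hGBx]; linarith


set_option maxHeartbeats 1000000 in
/-- bounds for finitely supported vectors -/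
lemma finsupp_bound {U V W : Set ℂ}
    (A : SeqN p →L[ℂ] SeqN p) (au av aw : ℕ → ℂ)
    (hpe : PseudoergodicN U V W au av aw) (hActs : SemiActs A au av aw)
    (bu bv bw : ℤ → ℂ) (hbr : RangesIn U V W bu bv bw)
    (B : SeqZ p →L[ℂ] SeqZ p) (hB : BiActs B bu bv bw)
    (x : SeqZ p) (l r : ℤ) (hsupp : ∀ i : ℤ, (x : ∀ _ : ℤ, ℂ) i ≠ 0 → l ≤ i ∧ i ≤ r) :
    ‖B x‖ ≤ ‖A‖ * ‖x‖ ∧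
      ∀ c : ℝ, (∀ y : SeqN p, c * ‖y‖ ≤ ‖A y‖) → c * ‖x‖ ≤ ‖B x‖ := by
  have key : ∀ δ : ℝ, 0 < δ →
      ∃ y : SeqN p, ‖y‖ = ‖x‖ ∧ ‖B x‖ ≤ ‖A y‖ + δ ∧ ‖A y‖ ≤ ‖B x‖ + δ := by
    intro δ hδ
    have hd : (0:ℝ) < 3 * (‖x‖ + 1) := by positivity
    have hε : 0 < δ / (3 * (‖x‖ + 1)) := div_pos hδ hd
    obtain ⟨Y, hYx, h1, h2⟩ := transfer A au av aw hpe hActs bu bv bw hbr B hB x l r hsupp hε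
    have hxle : 3 * (δ / (3 * (‖x‖ + 1))) * ‖x‖ ≤ δ := by
      have hao : 3 * (δ / (3 * (‖x‖ + 1))) * ‖x‖ = δ * ‖x‖ / (‖x‖ + 1) := by
        field_simp
      rw [hao, div_le_iff₀ (by positivity : (0:ℝ) < ‖x‖ + 1)]
      nlinarith [norm_nonneg x]
    exact ⟨Y, hYx, h1.trans (by linarith), h2.trans (by linarith)⟩
  constructor
  · refine le_of_forall_pos_le_add fun δ hδ => ?_
    obtain ⟨Y, hYx, h1, _⟩ := key δ hδ
    calc ‖B x‖ ≤ ‖A Y‖ + δ := h1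
      _ ≤ ‖A‖ * ‖Y‖ + δ := by linarith [A.le_opNorm Y]
      _ = ‖A‖ * ‖x‖ + δ := by rw [hYx]
  · intro c hc
    refine le_of_forall_pos_le_add fun δ hδ => ?_
    obtain ⟨Y, hYx, _, h2⟩ := key δ hδ
    calc c * ‖x‖ = c * ‖Y‖ := by rw [hYx]
      _ ≤ ‖A Y‖ := hc Y
      _ ≤ ‖B x‖ + δ := h2

/-- coe of a truncation -/
lemma coe_sum_single (F : Finset ℤ) (x : SeqZ p) (j : ℤ) :
    ((∑ i ∈ F, lp.single p i ((x : ∀ _ : ℤ, ℂ) i) : SeqZ p) : ∀ _ : ℤ, ℂ) j =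
      if j ∈ F then (x : ∀ _ : ℤ, ℂ) j else 0 := by
  classical
  rw [lp.coeFn_sum]
  simp only [Finset.sum_apply, lp.single_apply]
  exact Finset.sum_pi_single _ _ _

set_option maxHeartbeats 1000000 in
/-- upgrade of `finsupp_bound` to all vectors -/
lemma all_bound {U V W : Set ℂ}
    (A : SeqN p →L[ℂ] SeqN p) (au av aw : ℕ → ℂ)
    (hpe : PseudoergodicN U V W au av aw) (hActs : SemiActs A au av aw)
    (bu bv bw : ℤ → ℂ) (hbr : RangesIn U V W bu bv bw)
    (B : SeqZ p →L[ℂ] SeqZ p) (hB : BiActs B bu bv bw) :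
    ∀ x : SeqZ p, ‖B x‖ ≤ ‖A‖ * ‖x‖ := by
  have hfin : ∀ (x : SeqZ p) (F : Finset ℤ),
      (∀ j : ℤ, (x : ∀ _ : ℤ, ℂ) j ≠ 0 → j ∈ F) → ‖B x‖ ≤ ‖A‖ * ‖x‖ := by
    intro x F hF
    rcases F.eq_empty_or_nonempty with hFe | hFne
    · have hx : x = 0 := by
        apply lp.ext
        funext j
        by_contra h
        simpa [hFe] using hF j h
      simp only [hx, map_zero, norm_zero]
      positivity
    · exact (finsupp_bound A au av aw hpe hActs bu bv bw hbr B hB x (F.min' hFne)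
        (F.max' hFne) (fun j hj => ⟨F.min'_le j (hF j hj), F.le_max' j (hF j hj)⟩)).1
  intro x
  rcases eq_or_ne p ∞ with hp | hp
  · -- p = ∞ : restriction trick
    refine le_of_forall_pos_le_add fun δ hδ => ?_
    by_cases hBx : ‖B x‖ ≤ δ
    · have : (0:ℝ) ≤ ‖A‖ * ‖x‖ := by positivity
      linarith
    push_neg at hBx
    have hBx' : ‖B x‖ - δ < ‖B x‖ := by linarith
    subst hp
    have hsup : ‖B x‖ = ⨆ i, ‖(B x : ∀ _ : ℤ, ℂ) i‖ := lp.norm_eq_ciSup _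
    rw [hsup] at hBx'
    obtain ⟨i₀, hi₀⟩ := exists_lt_of_lt_ciSup hBx'
    classical
    set S : Finset ℤ := {i₀ - 1, i₀, i₀ + 1} with hS
    set x' : ℤ → ℂ := fun j => if j ∈ S then (x : ∀ _ : ℤ, ℂ) j else 0 with hx'
    have hx'dom : ∀ j, ‖x' j‖ ≤ 1 * ‖(x : ∀ _ : ℤ, ℂ) j‖ := by
      intro j
      rw [one_mul]
      simp only [hx']
      by_cases h : j ∈ S
      · rw [if_pos h]
      · rw [if_neg h, norm_zero]
        exact norm_nonneg _
    set X' : SeqZ ∞ := ⟨x', memℓp_dom id (fun a b h => h) x x' zero_le_one hx'dom⟩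
    have hX'le : ‖X'‖ ≤ ‖x‖ := by
      have := norm_dom id (fun a b h => h) x X' zero_le_one hx'dom
      rwa [one_mul] at this
    have hentry : (B X' : ∀ _ : ℤ, ℂ) i₀ = (B x : ∀ _ : ℤ, ℂ) i₀ := by
      rw [hB X' i₀, hB x i₀]
      have h1 : (X' : ∀ _ : ℤ, ℂ) (i₀ - 1) = (x : ∀ _ : ℤ, ℂ) (i₀ - 1) := by
        show x' (i₀ - 1) = _
        simp only [hx']
        rw [if_pos (by simp [hS] : i₀ - 1 ∈ S)]
      have h2 : (X' : ∀ _ : ℤ, ℂ) i₀ = (x : ∀ _ : ℤ, ℂ) i₀ := by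
        show x' i₀ = _
        simp only [hx']
        rw [if_pos (by simp [hS] : i₀ ∈ S)]
      have h3 : (X' : ∀ _ : ℤ, ℂ) (i₀ + 1) = (x : ∀ _ : ℤ, ℂ) (i₀ + 1) := by
        show x' (i₀ + 1) = _
        simp only [hx']
        rw [if_pos (by simp [hS] : i₀ + 1 ∈ S)]
      rw [h1, h2, h3]
    have hX'supp : ∀ j : ℤ, (X' : ∀ _ : ℤ, ℂ) j ≠ 0 → j ∈ S := by
      intro j hj
      by_contra h
      apply hj
      show x' j = 0
      simp only [hx']
      rw [if_neg h]
    calc ‖B x‖ ≤ ‖(B x : ∀ _ : ℤ, ℂ) i₀‖ + δ := by linarith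
      _ = ‖(B X' : ∀ _ : ℤ, ℂ) i₀‖ + δ := by rw [hentry]
      _ ≤ ‖B X'‖ + δ := by
          have := lp.norm_apply_le_norm ENNReal.top_ne_zero (B X') i₀
          linarith
      _ ≤ ‖A‖ * ‖X'‖ + δ := by linarith [hfin X' S hX'supp]
      _ ≤ ‖A‖ * ‖x‖ + δ := by
          have h0 : (0:ℝ) ≤ ‖A‖ := norm_nonneg _
          nlinarith
  · -- p < ∞ : density
    have hHasSum := lp.hasSum_single hp x
    have hTend : Filter.Tendsto
        (fun F : Finset ℤ => ∑ i ∈ F, lp.single p i ((x : ∀ _ : ℤ, ℂ) i))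
        Filter.atTop (nhds x) := hHasSum
    have h1 : Filter.Tendsto
        (fun F : Finset ℤ => ‖B (∑ i ∈ F, lp.single p i ((x : ∀ _ : ℤ, ℂ) i))‖)
        Filter.atTop (nhds ‖B x‖) :=
      ((B.continuous.tendsto x).comp hTend).norm
    have h2 : Filter.Tendsto
        (fun F : Finset ℤ => ‖A‖ * ‖(∑ i ∈ F, lp.single p i ((x : ∀ _ : ℤ, ℂ) i) : SeqZ p)‖)
        Filter.atTop (nhds (‖A‖ * ‖x‖)) :=
      (hTend.norm).const_mul _
    refine le_of_tendsto_of_tendsto' h1 h2 fun F => ?_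
    refine hfin _ F fun j hj => ?_
    by_contra h
    rw [coe_sum_single, if_neg h] at hj
    exact hj rfl


set_option maxHeartbeats 1000000 in
/-- extension of a semi-infinite tridiagonal operator to a bi-infinite one of at
least the same norm -/
lemma exists_ext {U V W : Set ℂ} {Ku Kv Kw : ℝ}
    (hKu : 0 ≤ Ku) (hKuU : ∀ z ∈ U, ‖z‖ ≤ Ku)
    (hKv : 0 ≤ Kv) (hKvV : ∀ z ∈ V, ‖z‖ ≤ Kv)
    (hKw : 0 ≤ Kw) (hKwW : ∀ z ∈ W, ‖z‖ ≤ Kw)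
    (bu bv bw : ℕ → ℂ) (hbr : RangesIn U V W bu bv bw)
    (B : SeqN p →L[ℂ] SeqN p) (hB : SemiActs B bu bv bw) :
    ∃ Bext : SeqZ p →L[ℂ] SeqZ p, MemM U V W Bext ∧ ‖B‖ ≤ ‖Bext‖ := by
  classical
  set u' : ℤ → ℂ := fun i => bu i.toNat with hu'
  set v' : ℤ → ℂ := fun i => bv i.toNat with hv'
  set w' : ℤ → ℂ := fun i => bw i.toNat with hw'
  obtain ⟨Bext, hBext⟩ := exists_biOp (p := p) (u := u') (v := v') (w := w')
    hKu (fun i => hKuU _ (hbr.1 _)) hKv (fun i => hKvV _ (hbr.2.1 _))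
    hKw (fun i => hKwW _ (hbr.2.2 _))
  refine ⟨Bext, ⟨u', v', w', ⟨fun i => hbr.1 _, fun i => hbr.2.1 _, fun i => hbr.2.2 _⟩,
    hBext⟩, ?_⟩
  refine B.opNorm_le_bound (norm_nonneg _) fun x => ?_
  set xt : ℤ → ℂ := fun i => if 0 ≤ i then (x : ∀ _ : ℕ, ℂ) i.toNat else 0 with hxt
  have he : Function.Injective (fun n : ℕ => (n : ℤ)) := fun a b h =>
    Nat.cast_injective h
  have hdom : ∀ n : ℕ, ‖xt ((n : ℤ))‖ ≤ 1 * ‖(x : ∀ _ : ℕ, ℂ) n‖ := by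
    intro n
    rw [one_mul]
    simp only [hxt]
    rw [if_pos (Int.natCast_nonneg n), Int.toNat_natCast]
  have hvan : ∀ i : ℤ, (∀ n : ℕ, (n : ℤ) ≠ i) → xt i = 0 := by
    intro i hi
    simp only [hxt]
    rw [if_neg]
    intro h0
    exact hi i.toNat (Int.toNat_of_nonneg h0)
  set X : SeqZ p := ⟨xt, memℓp_dom' _ he x xt zero_le_one hvan hdom⟩ with hX
  have hXnorm : ‖X‖ ≤ ‖x‖ := by
    have := norm_dom' _ he x X zero_le_one hvan hdom
    rwa [one_mul] at this
  have hXn : ∀ n : ℕ, (X : ∀ _ : ℤ, ℂ) ((n : ℤ)) = (x : ∀ _ : ℕ, ℂ) n := by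
    intro n
    show xt ((n : ℤ)) = (x : ∀ _ : ℕ, ℂ) n
    simp only [hxt]
    rw [if_pos (Int.natCast_nonneg n), Int.toNat_natCast]
  have hmatch : ∀ n : ℕ, (B x : ∀ _ : ℕ, ℂ) n = (Bext X : ∀ _ : ℤ, ℂ) ((n : ℤ)) := by
    intro n
    rw [hB x n, hBext X ((n : ℤ))]
    have htn : ((n : ℤ)).toNat = n := Int.toNat_natCast n
    have h2 : (X : ∀ _ : ℤ, ℂ) ((n : ℤ) + 1) = (x : ∀ _ : ℕ, ℂ) (n + 1) := by
      have : ((n : ℤ) + 1) = ((n + 1 : ℕ) : ℤ) := by push_cast; ring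
      rw [this]
      exact hXn (n + 1)
    have hu'n : u' ((n : ℤ)) = bu n := by simp only [hu']; rw [htn]
    have hv'n : v' ((n : ℤ)) = bv n := by simp only [hv']; rw [htn]
    have hw'n : w' ((n : ℤ)) = bw n := by simp only [hw']; rw [htn]
    rw [h2, hXn n, hu'n, hv'n, hw'n]
    by_cases hn : n = 0
    · subst hn
      have hxm1 : (X : ∀ _ : ℤ, ℂ) (((0 : ℕ) : ℤ) - 1) = 0 := by
        show xt (((0 : ℕ) : ℤ) - 1) = 0
        simp only [hxt]
        rw [if_neg (by norm_num)]
      rw [if_pos rfl, hxm1]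
      ring
    · have hn1 : 1 ≤ n := Nat.one_le_iff_ne_zero.2 hn
      have hxm1 : (X : ∀ _ : ℤ, ℂ) ((n : ℤ) - 1) = (x : ∀ _ : ℕ, ℂ) (n - 1) := by
        have : (n : ℤ) - 1 = ((n - 1 : ℕ) : ℤ) := by omega
        rw [this]
        exact hXn (n - 1)
      rw [if_neg hn, hxm1]
  have hnle : ‖B x‖ ≤ ‖Bext X‖ := by
    have := norm_dom _ he (Bext X) (B x) zero_le_one
      (fun n => by rw [one_mul, hmatch n])
    rwa [one_mul] at this
  calc ‖B x‖ ≤ ‖Bext X‖ := hnle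
    _ ≤ ‖Bext‖ * ‖X‖ := Bext.le_opNorm X
    _ ≤ ‖Bext‖ * ‖x‖ := mul_le_mul_of_nonneg_left hXnorm (norm_nonneg _)


set_option maxHeartbeats 4000000 in
/-- lower bound transfer to all vectors -/
lemma all_lower {U V W : Set ℂ}
    (A : SeqN p →L[ℂ] SeqN p) (au av aw : ℕ → ℂ)
    (hpe : PseudoergodicN U V W au av aw) (hActs : SemiActs A au av aw)
    (bu bv bw : ℤ → ℂ) (hbr : RangesIn U V W bu bv bw)
    (B : SeqZ p →L[ℂ] SeqZ p) (hB : BiActs B bu bv bw)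
    {Ku Kw : ℝ} (hKu : 0 ≤ Ku) (hbu : ∀ i, ‖bu i‖ ≤ Ku)
    (hKw : 0 ≤ Kw) (hbw : ∀ i, ‖bw i‖ ≤ Kw)
    {c : ℝ} (hc0 : 0 ≤ c) (hc : ∀ y : SeqN p, c * ‖y‖ ≤ ‖A y‖) :
    ∀ x : SeqZ p, c * ‖x‖ ≤ ‖B x‖ := by
  have hfin : ∀ (x : SeqZ p) (l r : ℤ),
      (∀ j : ℤ, (x : ∀ _ : ℤ, ℂ) j ≠ 0 → l ≤ j ∧ j ≤ r) → c * ‖x‖ ≤ ‖B x‖ :=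
    fun x l r hsupp =>
      (finsupp_bound A au av aw hpe hActs bu bv bw hbr B hB x l r hsupp).2 c hc
  intro x
  rcases eq_or_ne p ∞ with hp | hp
  · -- p = ∞ : smooth cutoff
    subst hp
    refine le_of_forall_pos_le_add fun η hη => ?_
    -- choose δ and m
    have hc1 : (0:ℝ) < c + 1 := by linarith
    set δ : ℝ := η / (2 * (c + 1)) with hδdef
    have hδ : 0 < δ := by positivity
    obtain ⟨N, hN⟩ := exists_nat_gt (2 * (Ku + Kw) * ‖x‖ / η)
    set m : ℕ := max N 1 with hm
    have hm1 : 1 ≤ m := le_max_right _ _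
    have hmpos : (0:ℝ) < (m:ℝ) := by positivity
    have hmbound : (Ku + Kw) / (m:ℝ) * ‖x‖ ≤ η / 2 := by
      have hNm : (N:ℝ) ≤ (m:ℝ) := by exact_mod_cast le_max_left N 1
      have h1 : 2 * (Ku + Kw) * ‖x‖ / η < (m:ℝ) := lt_of_lt_of_le hN hNm
      rw [div_mul_eq_mul_div, div_le_iff₀ hmpos]
      rw [div_lt_iff₀ hη] at h1
      nlinarith [norm_nonneg x, mul_nonneg (mul_nonneg (by linarith : (0:ℝ) ≤ 2)
        (add_nonneg hKu hKw)) (norm_nonneg x)]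
    -- degenerate case
    by_cases hxsmall : ‖x‖ ≤ δ
    · have : c * ‖x‖ ≤ c * δ := mul_le_mul_of_nonneg_left hxsmall hc0
      have hcδ : c * δ ≤ η / 2 := by
        rw [hδdef]
        rw [mul_div_assoc']
        rw [div_le_div_iff₀ (by positivity) (by norm_num : (0:ℝ) < 2)]
        nlinarith
      have h0 : (0:ℝ) ≤ ‖B x‖ := norm_nonneg _
      linarith
    push_neg at hxsmall
    have hxpos : 0 < ‖x‖ := lt_of_le_of_lt hδ.le hxsmall
    -- pick i₀ with ‖x i₀‖ close to ‖x‖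
    have hsup : ‖x‖ = ⨆ i, ‖(x : ∀ _ : ℤ, ℂ) i‖ := lp.norm_eq_ciSup _
    have hlt : ‖x‖ - δ < ⨆ i, ‖(x : ∀ _ : ℤ, ℂ) i‖ := by rw [← hsup]; linarith
    obtain ⟨i₀, hi₀⟩ := exists_lt_of_lt_ciSup hlt
    -- the cutoff function
    set ψr : ℤ → ℝ := fun j => max (1 - ((|j - i₀| : ℤ) : ℝ) / (m:ℝ)) 0 with hψr
    set ψ : ℤ → ℂ := fun j => ((ψr j : ℝ) : ℂ) with hψ
    have hψr_nonneg : ∀ j, 0 ≤ ψr j := fun j => le_max_right _ _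
    have hψr_le1 : ∀ j, ψr j ≤ 1 := by
      intro j
      simp only [hψr]
      refine max_le ?_ zero_le_one
      have h1 : (0:ℝ) ≤ ((|j - i₀| : ℤ) : ℝ) / (m:ℝ) := by positivity
      linarith
    have hψ_le1 : ∀ j, ‖ψ j‖ ≤ 1 := by
      intro j
      simp only [hψ, Complex.norm_real, Real.norm_eq_abs,
        abs_of_nonneg (hψr_nonneg j)]
      exact hψr_le1 j
    have hψi₀ : ψ i₀ = 1 := by
      simp only [hψ, hψr]
      norm_num
    have hψ0 : ∀ j : ℤ, (m:ℤ) ≤ |j - i₀| → ψ j = 0 := by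
      intro j hj
      simp only [hψ, hψr]
      have h1 : (m:ℝ) ≤ ((|j - i₀| : ℤ) : ℝ) := by exact_mod_cast hj
      have h2 : 1 - ((|j - i₀| : ℤ) : ℝ) / (m:ℝ) ≤ 0 := by
        rw [sub_nonpos, le_div_iff₀ hmpos]
        nlinarith
      rw [max_eq_right h2]
      norm_num
    have hlip : ∀ j j' : ℤ, |j - j'| ≤ 1 → ‖ψ j - ψ j'‖ ≤ 1 / (m:ℝ) := by
      intro j j' hjj
      have h1 : ψ j - ψ j' = ((ψr j - ψr j' : ℝ) : ℂ) := by push_cast [hψ]; ring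
      rw [h1, Complex.norm_real, Real.norm_eq_abs]
      have h2 : |ψr j - ψr j'| ≤
          |(1 - ((|j - i₀| : ℤ) : ℝ) / (m:ℝ)) - (1 - ((|j' - i₀| : ℤ) : ℝ) / (m:ℝ))| := by
        simp only [hψr]
        exact abs_max_sub_max_le_abs _ _ _
      have h3 : |(1 - ((|j - i₀| : ℤ) : ℝ) / (m:ℝ)) - (1 - ((|j' - i₀| : ℤ) : ℝ) / (m:ℝ))| =
          |((|j' - i₀| : ℤ) : ℝ) - ((|j - i₀| : ℤ) : ℝ)| / (m:ℝ) := by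
        rw [← abs_of_pos hmpos, ← abs_div]
        congr 1
        field_simp
        rw [abs_of_pos hmpos]; ring
      have h4 : |((|j' - i₀| : ℤ) : ℝ) - ((|j - i₀| : ℤ) : ℝ)| ≤ 1 := by
        have hz : |(|j' - i₀| - |j - i₀| : ℤ)| ≤ 1 := by
          simp only [Int.abs_eq_natAbs] at hjj ⊢
          omega
        have hcast : ((|j' - i₀| : ℤ) : ℝ) - ((|j - i₀| : ℤ) : ℝ) =
            (((|j' - i₀| - |j - i₀| : ℤ)) : ℝ) := by push_cast; ring
        rw [hcast, ← Int.cast_abs]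
        exact_mod_cast hz
      calc |ψr j - ψr j'| ≤ _ := h2
        _ = _ := h3
        _ ≤ 1 / (m:ℝ) := by
            rw [div_le_div_iff₀ hmpos hmpos]
            nlinarith
    -- the cutoff vector
    set x2 : ℤ → ℂ := fun j => ψ j * (x : ∀ _ : ℤ, ℂ) j with hx2
    have hx2fin : ∀ j ∉ Finset.Icc (i₀ - m) (i₀ + m), x2 j = 0 := by
      intro j hj
      rw [Finset.mem_Icc] at hj
      push_neg at hj
      have : (m:ℤ) ≤ |j - i₀| := by
        rcases le_or_gt j (i₀ - 1 - m) with h | h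
        · rw [abs_sub_comm, abs_of_nonneg (by omega)]; omega
        · have hj2 : i₀ + m < j := by omega
          rw [abs_of_nonneg (by omega)]
          omega
      simp only [hx2]
      rw [hψ0 j this, zero_mul]
    set X2 : SeqZ ∞ := ⟨x2, memℓp_finsupp (p := ∞) _ x2 hx2fin⟩ with hX2
    have hX2supp : ∀ j : ℤ, (X2 : ∀ _ : ℤ, ℂ) j ≠ 0 → i₀ - m ≤ j ∧ j ≤ i₀ + m := by
      intro j hj
      by_contra hcon
      refine hj (hx2fin j ?_)
      rw [Finset.mem_Icc]
      omega
    have hX2i₀ : (X2 : ∀ _ : ℤ, ℂ) i₀ = (x : ∀ _ : ℤ, ℂ) i₀ := by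
      show x2 i₀ = _
      simp only [hx2]
      rw [hψi₀, one_mul]
    have hX2ge : ‖x‖ - δ ≤ ‖X2‖ := by
      have h1 := lp.norm_apply_le_norm ENNReal.top_ne_zero X2 i₀
      rw [hX2i₀] at h1
      linarith [hi₀.le]
    -- decompose B X2
    set P : ℤ → ℂ := fun j => ψ j * (B x : ∀ _ : ℤ, ℂ) j with hP
    set E₁ : ℤ → ℂ := fun j => bu j * ((ψ (j-1) - ψ j) * (x : ∀ _ : ℤ, ℂ) (j-1)) with hE₁
    set E₂ : ℤ → ℂ := fun j => bw j * ((ψ (j+1) - ψ j) * (x : ∀ _ : ℤ, ℂ) (j+1)) with hE₂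
    have hPdom : ∀ j, ‖P j‖ ≤ 1 * ‖(B x : ∀ _ : ℤ, ℂ) j‖ := by
      intro j
      rw [one_mul]
      simp only [hP]
      rw [norm_mul]
      calc ‖ψ j‖ * ‖(B x : ∀ _ : ℤ, ℂ) j‖ ≤ 1 * ‖(B x : ∀ _ : ℤ, ℂ) j‖ :=
        mul_le_mul_of_nonneg_right (hψ_le1 j) (norm_nonneg _)
        _ = _ := one_mul _
    have hE₁dom : ∀ j, ‖E₁ j‖ ≤ Ku / (m:ℝ) * ‖(x : ∀ _ : ℤ, ℂ) (j - 1)‖ := by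
      intro j
      simp only [hE₁]
      rw [norm_mul, norm_mul]
      have h1 : ‖ψ (j-1) - ψ j‖ ≤ 1/(m:ℝ) := hlip _ _ (by norm_num)
      have h2 : ‖bu j‖ * (‖ψ (j-1) - ψ j‖ * ‖(x : ∀ _ : ℤ, ℂ) (j-1)‖) ≤
          Ku * ((1/(m:ℝ)) * ‖(x : ∀ _ : ℤ, ℂ) (j-1)‖) := by
        calc ‖bu j‖ * (‖ψ (j-1) - ψ j‖ * ‖(x : ∀ _ : ℤ, ℂ) (j-1)‖)
            ≤ Ku * (‖ψ (j-1) - ψ j‖ * ‖(x : ∀ _ : ℤ, ℂ) (j-1)‖) :=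
              mul_le_mul_of_nonneg_right (hbu j)
                (mul_nonneg (norm_nonneg _) (norm_nonneg _))
          _ ≤ Ku * ((1/(m:ℝ)) * ‖(x : ∀ _ : ℤ, ℂ) (j-1)‖) :=
              mul_le_mul_of_nonneg_left
                (mul_le_mul_of_nonneg_right h1 (norm_nonneg _)) hKu
      calc ‖bu j‖ * (‖ψ (j-1) - ψ j‖ * ‖(x : ∀ _ : ℤ, ℂ) (j-1)‖) ≤
          Ku * ((1/(m:ℝ)) * ‖(x : ∀ _ : ℤ, ℂ) (j-1)‖) := h2
        _ = Ku / (m:ℝ) * ‖(x : ∀ _ : ℤ, ℂ) (j-1)‖ := by ring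
    have hE₂dom : ∀ j, ‖E₂ j‖ ≤ Kw / (m:ℝ) * ‖(x : ∀ _ : ℤ, ℂ) (j + 1)‖ := by
      intro j
      simp only [hE₂]
      rw [norm_mul, norm_mul]
      have h1 : ‖ψ (j+1) - ψ j‖ ≤ 1/(m:ℝ) := hlip _ _ (by norm_num)
      have h2 : ‖bw j‖ * (‖ψ (j+1) - ψ j‖ * ‖(x : ∀ _ : ℤ, ℂ) (j+1)‖) ≤
          Kw * ((1/(m:ℝ)) * ‖(x : ∀ _ : ℤ, ℂ) (j+1)‖) := by
        calc ‖bw j‖ * (‖ψ (j+1) - ψ j‖ * ‖(x : ∀ _ : ℤ, ℂ) (j+1)‖)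
            ≤ Kw * (‖ψ (j+1) - ψ j‖ * ‖(x : ∀ _ : ℤ, ℂ) (j+1)‖) :=
              mul_le_mul_of_nonneg_right (hbw j)
                (mul_nonneg (norm_nonneg _) (norm_nonneg _))
          _ ≤ Kw * ((1/(m:ℝ)) * ‖(x : ∀ _ : ℤ, ℂ) (j+1)‖) :=
              mul_le_mul_of_nonneg_left
                (mul_le_mul_of_nonneg_right h1 (norm_nonneg _)) hKw
      calc ‖bw j‖ * (‖ψ (j+1) - ψ j‖ * ‖(x : ∀ _ : ℤ, ℂ) (j+1)‖) ≤
          Kw * ((1/(m:ℝ)) * ‖(x : ∀ _ : ℤ, ℂ) (j+1)‖) := h2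
        _ = Kw / (m:ℝ) * ‖(x : ∀ _ : ℤ, ℂ) (j+1)‖ := by ring
    set Pl : SeqZ ∞ := ⟨P, memℓp_dom id (fun a b h => h) (B x) P zero_le_one hPdom⟩
    set El₁ : SeqZ ∞ := ⟨E₁, memℓp_dom (fun j : ℤ => j - 1) sub_left_injective x E₁
      (by positivity) hE₁dom⟩
    set El₂ : SeqZ ∞ := ⟨E₂, memℓp_dom (fun j : ℤ => j + 1) (add_left_injective 1) x E₂
      (by positivity) hE₂dom⟩
    have hPl : ‖Pl‖ ≤ ‖B x‖ := by
      have := norm_dom id (fun a b h => h) (B x) Pl zero_le_one hPdom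
      rwa [one_mul] at this
    have hEl₁ : ‖El₁‖ ≤ Ku / (m:ℝ) * ‖x‖ :=
      norm_dom (fun j : ℤ => j - 1) sub_left_injective x El₁ (by positivity) hE₁dom
    have hEl₂ : ‖El₂‖ ≤ Kw / (m:ℝ) * ‖x‖ :=
      norm_dom (fun j : ℤ => j + 1) (add_left_injective 1) x El₂ (by positivity) hE₂dom
    have hdecomp : B X2 = Pl + El₁ + El₂ := by
      apply lp.ext
      funext j
      show (B X2 : ∀ _ : ℤ, ℂ) j = P j + E₁ j + E₂ j
      rw [hB X2 j]
      have h1 : (X2 : ∀ _ : ℤ, ℂ) (j - 1) = ψ (j-1) * (x : ∀ _ : ℤ, ℂ) (j-1) := rfl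
      have h2 : (X2 : ∀ _ : ℤ, ℂ) j = ψ j * (x : ∀ _ : ℤ, ℂ) j := rfl
      have h3 : (X2 : ∀ _ : ℤ, ℂ) (j + 1) = ψ (j+1) * (x : ∀ _ : ℤ, ℂ) (j+1) := rfl
      rw [h1, h2, h3]
      simp only [hP, hE₁, hE₂]
      rw [hB x j]
      ring
    have hBX2 : ‖B X2‖ ≤ ‖B x‖ + (Ku + Kw) / (m:ℝ) * ‖x‖ := by
      rw [hdecomp]
      calc ‖Pl + El₁ + El₂‖ ≤ ‖Pl‖ + ‖El₁‖ + ‖El₂‖ := norm_add₃_le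
        _ ≤ ‖B x‖ + (Ku / (m:ℝ) * ‖x‖ + Kw / (m:ℝ) * ‖x‖) := by linarith
        _ = ‖B x‖ + (Ku + Kw) / (m:ℝ) * ‖x‖ := by ring
    have hmain := hfin X2 (i₀ - m) (i₀ + m) hX2supp
    have hcδ2 : c * δ ≤ η / 2 := by
      rw [hδdef, mul_div_assoc']
      rw [div_le_div_iff₀ (by positivity) (by norm_num : (0:ℝ) < 2)]
      nlinarith
    calc c * ‖x‖ = c * (‖x‖ - δ) + c * δ := by ring
      _ ≤ c * ‖X2‖ + c * δ := by
          have := mul_le_mul_of_nonneg_left hX2ge hc0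
          linarith
      _ ≤ ‖B X2‖ + c * δ := by linarith
      _ ≤ ‖B x‖ + (Ku + Kw) / (m:ℝ) * ‖x‖ + c * δ := by linarith
      _ ≤ ‖B x‖ + η := by linarith
  · -- p < ∞ : density
    have hHasSum := lp.hasSum_single hp x
    have hTend : Filter.Tendsto
        (fun F : Finset ℤ => ∑ i ∈ F, lp.single p i ((x : ∀ _ : ℤ, ℂ) i))
        Filter.atTop (nhds x) := hHasSum
    have h1 : Filter.Tendsto
        (fun F : Finset ℤ => ‖B (∑ i ∈ F, lp.single p i ((x : ∀ _ : ℤ, ℂ) i))‖)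
        Filter.atTop (nhds ‖B x‖) :=
      ((B.continuous.tendsto x).comp hTend).norm
    have h2 : Filter.Tendsto
        (fun F : Finset ℤ => c * ‖(∑ i ∈ F, lp.single p i ((x : ∀ _ : ℤ, ℂ) i) : SeqZ p)‖)
        Filter.atTop (nhds (c * ‖x‖)) :=
      (hTend.norm).const_mul _
    refine le_of_tendsto_of_tendsto' h2 h1 fun F => ?_
    rcases F.eq_empty_or_nonempty with hFe | hFne
    · subst hFe
      simp only [Finset.sum_empty, map_zero, norm_zero, mul_zero]
      exact le_rfl
    · refine hfin _ (F.min' hFne) (F.max' hFne) fun j hj => ?_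
      have hjF : j ∈ F := by
        by_contra h
        rw [coe_sum_single, if_neg h] at hj
        exact hj rfl
      exact ⟨F.min'_le j hjF, F.le_max' j hjF⟩

end St10

end

set_option maxHeartbeats 1000000 in
/-- (a) For `A₊ ∈ PE₊(U,V,W)`:
`‖A₊‖_p = max_{B₊ ∈ M₊(U,V,W)} ‖B₊‖_p = M_p`.  (b) If `A₊ ∈ PE₊(U,V,W)` is invertible
then `‖A₊⁻¹‖_p ≥ N_p`. -/
theorem statement10 (U V W : Set ℂ)
    (hUne : U.Nonempty) (hUc : IsCompact U) (hVne : V.Nonempty) (hVc : IsCompact V)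
    (hWne : W.Nonempty) (hWc : IsCompact W)
    (p : ℝ≥0∞) [Fact (1 ≤ p)]
    (A : SeqN p →L[ℂ] SeqN p) (hA : MemPEPlus U V W A) :
    (IsGreatest {x : ℝ | ∃ B : SeqN p →L[ℂ] SeqN p, MemMPlus U V W B ∧ x = ‖B‖} ‖A‖ ∧
      ‖A‖ = Mnorm U V W p) ∧
    (IsUnit A → Nnorm U V W p ≤ ‖Ring.inverse A‖) := by
  obtain ⟨au, av, aw, har, hpe, hacts⟩ := hA
  obtain ⟨Ku₀, hKu₀⟩ := hUc.isBounded.exists_norm_le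
  obtain ⟨Kv₀, hKv₀⟩ := hVc.isBounded.exists_norm_le
  obtain ⟨Kw₀, hKw₀⟩ := hWc.isBounded.exists_norm_le
  set Ku := max Ku₀ 0 with hKudef
  set Kv := max Kv₀ 0 with hKvdef
  set Kw := max Kw₀ 0 with hKwdef
  have hKu : (0:ℝ) ≤ Ku := le_max_right _ _
  have hKv : (0:ℝ) ≤ Kv := le_max_right _ _
  have hKw : (0:ℝ) ≤ Kw := le_max_right _ _
  have hKuU : ∀ z ∈ U, ‖z‖ ≤ Ku := fun z hz => (hKu₀ z hz).trans (le_max_left _ _)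
  have hKvV : ∀ z ∈ V, ‖z‖ ≤ Kv := fun z hz => (hKv₀ z hz).trans (le_max_left _ _)
  have hKwW : ∀ z ∈ W, ‖z‖ ≤ Kw := fun z hz => (hKw₀ z hz).trans (le_max_left _ _)
  have F1 : ∀ B : SeqZ p →L[ℂ] SeqZ p, MemM U V W B → ‖B‖ ≤ ‖A‖ := by
    rintro B ⟨bu, bv, bw, hbr, hB⟩
    exact B.opNorm_le_bound (norm_nonneg A)
      (St10.all_bound A au av aw hpe hacts bu bv bw hbr B hB)
  have F2 : ∀ B : SeqN p →L[ℂ] SeqN p, MemMPlus U V W B → ‖B‖ ≤ ‖A‖ := by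
    rintro B ⟨bu, bv, bw, hbr, hB⟩
    obtain ⟨Bext, hmem, hle⟩ :=
      St10.exists_ext hKu hKuU hKv hKvV hKw hKwW bu bv bw hbr B hB
    exact hle.trans (F1 Bext hmem)
  have hGreatest : IsGreatest
      {x : ℝ | ∃ B : SeqN p →L[ℂ] SeqN p, MemMPlus U V W B ∧ x = ‖B‖} ‖A‖ := by
    constructor
    · exact ⟨A, ⟨au, av, aw, har, hacts⟩, rfl⟩
    · rintro x ⟨B, hB, rfl⟩
      exact F2 B hB
  have hMnorm : ‖A‖ = Mnorm U V W p := by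
    refine le_antisymm ?_ ?_
    · obtain ⟨Aext, hmem, hle⟩ :=
        St10.exists_ext hKu hKuU hKv hKvV hKw hKwW au av aw har A hacts
      refine hle.trans ?_
      unfold Mnorm
      refine le_csSup ⟨Ku + Kv + Kw, ?_⟩ ⟨Aext, hmem, rfl⟩
      rintro x ⟨B, ⟨bu, bv, bw, hbr, hB⟩, rfl⟩
      exact St10.biacts_bound B hB hKu (fun i => hKuU _ (hbr.1 i))
        hKv (fun i => hKvV _ (hbr.2.1 i)) hKw (fun i => hKwW _ (hbr.2.2 i))
    · unfold Mnorm
      refine Real.sSup_le ?_ (norm_nonneg A)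
      rintro x ⟨B, hB, rfl⟩
      exact F1 B hB
  refine ⟨⟨hGreatest, hMnorm⟩, ?_⟩
  intro hUnit
  have hone : (1 : SeqN p →L[ℂ] SeqN p) ≠ 0 := by
    intro h
    have h1 := congrArg
      (fun T : SeqN p →L[ℂ] SeqN p => (T (lp.single p 0 1) : ∀ _ : ℕ, ℂ) 0) h
    simp only [ContinuousLinearMap.one_apply, ContinuousLinearMap.zero_apply] at h1
    rw [lp.single_apply_self] at h1
    exact one_ne_zero h1
  have hinv_mul : Ring.inverse A * A = 1 := Ring.inverse_mul_cancel A hUnit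
  have hRApos : 0 < ‖Ring.inverse A‖ := by
    rcases (norm_nonneg (Ring.inverse A)).lt_or_eq with h | h
    · exact h
    · exfalso
      have h0 : Ring.inverse A = 0 := by rwa [eq_comm, norm_eq_zero] at h
      rw [h0, zero_mul] at hinv_mul
      exact hone hinv_mul.symm
  set c := ‖Ring.inverse A‖⁻¹ with hcdef
  have hcpos : 0 < c := inv_pos.2 hRApos
  have hcA : ∀ y : SeqN p, c * ‖y‖ ≤ ‖A y‖ := by
    intro y
    have h2 : (Ring.inverse A) (A y) = y := by
      have h3 := congrArg (fun T : SeqN p →L[ℂ] SeqN p => T y) hinv_mul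
      simpa [ContinuousLinearMap.mul_apply] using h3
    have h1 : ‖y‖ ≤ ‖Ring.inverse A‖ * ‖A y‖ := by
      calc ‖y‖ = ‖(Ring.inverse A) (A y)‖ := by rw [h2]
        _ ≤ ‖Ring.inverse A‖ * ‖A y‖ := (Ring.inverse A).le_opNorm _
    calc c * ‖y‖ ≤ c * (‖Ring.inverse A‖ * ‖A y‖) :=
      mul_le_mul_of_nonneg_left h1 hcpos.le
      _ = ‖A y‖ := by
          rw [hcdef]
          field_simp
  unfold Nnorm
  refine Real.sSup_le ?_ (norm_nonneg _)
  rintro t ⟨B, ⟨bu, bv, bw, hbr, hB⟩, rfl⟩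
  by_cases hUB : IsUnit B
  swap
  · rw [Ring.inverse_non_unit B hUB, norm_zero]
    exact norm_nonneg _
  have hlow : ∀ x : SeqZ p, c * ‖x‖ ≤ ‖B x‖ :=
    St10.all_lower A au av aw hpe hacts bu bv bw hbr B hB hKu
      (fun i => hKuU _ (hbr.1 i)) hKw (fun i => hKwW _ (hbr.2.2 i)) hcpos.le hcA
  refine ContinuousLinearMap.opNorm_le_bound _ (norm_nonneg _) fun z => ?_
  have hBz : B ((Ring.inverse B) z) = z := by
    have hmul : B * Ring.inverse B = 1 := Ring.mul_inverse_cancel B hUB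
    have h3 := congrArg (fun T : SeqZ p →L[ℂ] SeqZ p => T z) hmul
    simpa [ContinuousLinearMap.mul_apply] using h3
  have h1 := hlow ((Ring.inverse B) z)
  rw [hBz] at h1
  have h2 : ‖(Ring.inverse B) z‖ ≤ c⁻¹ * ‖z‖ := by
    calc ‖(Ring.inverse B) z‖ = c⁻¹ * (c * ‖(Ring.inverse B) z‖) := by
          field_simp
      _ ≤ c⁻¹ * ‖z‖ := mul_le_mul_of_nonneg_left h1 (inv_pos.2 hcpos).le
  rwa [hcdef, inv_inv] at h2
end
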